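/- arXiv:math/0602131 — 8 statements merged into one kernel-verified Lean document; each statement's English description precedes it below -/
import Mathlib

section
/- Let G be a nilpotent group and N a normal torsion-free subgroup of G. If x ∈ G, y ∈ N, and n is a positive integer such that [x^n, y] = e, then [x, y] = e. -/
open Subgroup

open scoped commutatorElement

/-- If `x` commutes with `⁅x, y⁆`, then `⁅x ^ k, y⁆ = ⁅x, y⁆ ^ k`. -/
private lemma comm_pow_of_commute {G : Type*} [Group G] (x y : G)
    (hc : Commute x ⁅x, y⁆) : ∀ k : ℕ, ⁅x ^ k, y⁆ = ⁅x, y⁆ ^ k := by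
  intro k
  induction k with
  | zero => simp
  | succ k ih =>
    have key : ⁅x ^ (k + 1), y⁆ = x * ⁅x ^ k, y⁆ * x⁻¹ * ⁅x, y⁆ := by
      rw [pow_succ']
      group
    rw [key, ih, (hc.pow_right k).eq, mul_inv_cancel_right, ← pow_succ]

/-- Key induction: statement with explicit lower central series bound. -/
private theorem aux : ∀ (c : ℕ) {G : Type*} [Group G],
    (⊤ : Subgroup G).lowerCentralSeries c = ⊥ →
    ∀ (N : Subgroup G), N.Normal →
    (∀ y ∈ N, y ≠ 1 → ¬ IsOfFinOrder y) →
    ∀ (x y : G), y ∈ N → ∀ n : ℕ, 0 < n → ⁅x ^ n, y⁆ = 1 → ⁅x, y⁆ = 1 := by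
  intro c
  induction c with
  | zero =>
    intro G _ hb N _ _ x y _ n _ _
    have : ⁅x, y⁆ ∈ (⊤ : Subgroup G).lowerCentralSeries 0 := mem_top _
    rw [hb, mem_bot] at this
    exact this
  | succ c ih =>
    intro G _ hb N hN hNtf x y hy n hn h
    set c₁ := ⁅x, y⁆ with hc₁def
    -- c₁ ∈ N
    have hc₁N : c₁ ∈ N := by
      have h1 : x * y * x⁻¹ ∈ N := hN.conj_mem y hy x
      have h2 : (x * y * x⁻¹) * y⁻¹ ∈ N := N.mul_mem h1 (N.inv_mem hy)
      simpa [hc₁def, commutatorElement_def, mul_assoc] using h2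
    -- x ^ n commutes with c₁
    have hxny : Commute (x ^ n) y := commutatorElement_eq_one_iff_commute.mp h
    have hxnx : Commute (x ^ n) x := (Commute.refl x).pow_left n
    have hxnc : Commute (x ^ n) c₁ := by
      have : Commute (x ^ n) (x * y * x⁻¹ * y⁻¹) :=
        ((hxnx.mul_right hxny).mul_right hxnx.inv_right).mul_right hxny.inv_right
      simpa [hc₁def, commutatorElement_def] using this
    -- the key step: x commutes with c₁
    have key : Commute x c₁ := by
      rw [← commutatorElement_eq_one_iff_commute]
      rcases c with _ | c'
      · -- class ≤ 1 : abelian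
        have h1 : c₁ ∈ (⊤ : Subgroup G).lowerCentralSeries 1 := by
          rw [Subgroup.top_lowerCentralSeries_one]
          exact commutator_mem_commutator (mem_top x) (mem_top y)
        rw [hb, mem_bot] at h1
        rw [h1]
        simp
      · -- class ≤ c' + 2 : use the subgroup M = ⟨x⟩ ⊔ [G, G]
        set D := _root_.commutator G with hD
        set M := Subgroup.closure ({x} : Set G) ⊔ D with hM
        haveI : D.Normal := by rw [hD, _root_.commutator_def]; exact commutator_normal ⊤ ⊤
        have hxM : x ∈ M := mem_sup_left (subset_closure rfl)
        have hc₁D : c₁ ∈ D := by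
          rw [hD, _root_.commutator_def]
          exact commutator_mem_commutator (mem_top x) (mem_top y)
        have hc₁M : c₁ ∈ M := mem_sup_right hc₁D
        -- membership in M means x ^ k * d
        have hmemM : ∀ a ∈ M, ∃ k : ℤ, ∃ d ∈ D, a = x ^ k * d := by
          intro a ha
          have ha' : a ∈ (↑(Subgroup.closure ({x} : Set G) ⊔ D) : Set G) := ha
          rw [mul_normal] at ha'
          rcases ha' with ⟨h1, hh1, d, hd, rfl⟩
          rcases Subgroup.mem_closure_singleton.mp hh1 with ⟨k, rfl⟩
          exact ⟨k, d, hd, rfl⟩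
        have h2G : (⊤ : Subgroup G).lowerCentralSeries 2 = ⁅D, (⊤ : Subgroup G)⁆ := by
          show ⁅(⊤ : Subgroup G).lowerCentralSeries 1, (⊤ : Subgroup G)⁆ = _
          rw [Subgroup.top_lowerCentralSeries_one, hD]
        haveI hDTnormal : (⁅D, (⊤ : Subgroup G)⁆).Normal := Subgroup.commutator_normal D ⊤
        -- the commutator subgroup of M maps into γ₂(G)
        have hbase : Subgroup.map M.subtype ((⊤ : Subgroup M).lowerCentralSeries 1) ≤
            (⊤ : Subgroup G).lowerCentralSeries 2 := by
          rw [Subgroup.top_lowerCentralSeries_one, _root_.commutator_def, Subgroup.map_commutator,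
            ← MonoidHom.range_eq_map, range_subtype, commutator_le]
          intro a ha b hb'
          rcases hmemM a ha with ⟨k, d, hd, rfl⟩
          rcases hmemM b hb' with ⟨l, e, he, rfl⟩
          rw [h2G]
          have split1 : ⁅x ^ k * d, x ^ l * e⁆ =
              x ^ k * ⁅d, x ^ l * e⁆ * (x ^ k)⁻¹ * ⁅x ^ k, x ^ l * e⁆ := by group
          have split2 : ⁅x ^ k, x ^ l * e⁆ = ⁅x ^ k, x ^ l⁆ * (x ^ l * ⁅x ^ k, e⁆ * (x ^ l)⁻¹) := by
            group
          have m1 : ⁅d, x ^ l * e⁆ ∈ ⁅D, (⊤ : Subgroup G)⁆ :=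
            commutator_mem_commutator hd (mem_top _)
          have m2 : ⁅x ^ k, e⁆ ∈ ⁅D, (⊤ : Subgroup G)⁆ := by
            rw [← commutatorElement_inv]
            exact inv_mem (commutator_mem_commutator he (mem_top _))
          have m3 : ⁅x ^ k, x ^ l * e⁆ ∈ ⁅D, (⊤ : Subgroup G)⁆ := by
            rw [split2, (Commute.zpow_zpow_self x k l).commutator_eq, one_mul]
            exact hDTnormal.conj_mem _ m2 _
          rw [split1]
          exact mul_mem (hDTnormal.conj_mem _ m1 _) m3
        -- all terms of the lower central series of M map into deeper terms of that of G
        have hstep : ∀ i : ℕ, Subgroup.map M.subtype ((⊤ : Subgroup M).lowerCentralSeries (i + 1)) ≤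
            (⊤ : Subgroup G).lowerCentralSeries (i + 2) := by
          intro i
          induction i with
          | zero => exact hbase
          | succ i ihi =>
            show Subgroup.map M.subtype ⁅(⊤ : Subgroup M).lowerCentralSeries (i + 1), (⊤ : Subgroup M)⁆ ≤
              ⁅(⊤ : Subgroup G).lowerCentralSeries (i + 2), (⊤ : Subgroup G)⁆
            rw [Subgroup.map_commutator]
            exact commutator_mono ihi le_top
        -- hence M has smaller nilpotency length
        have hMbot : (⊤ : Subgroup M).lowerCentralSeries (c' + 1) = ⊥ := by
          have h1 := hstep c'
          rw [hb] at h1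
          exact (Subgroup.map_eq_bot_iff_of_injective _ M.subtype_injective).mp
            (le_bot_iff.mp h1)
        -- apply the induction hypothesis inside M
        haveI := hN
        have htf' : ∀ z ∈ N.subgroupOf M, z ≠ 1 → ¬ IsOfFinOrder z := by
          intro z hz hz1 hf
          exact hNtf z.1 (mem_subgroupOf.mp hz)
            (fun e => hz1 (Subtype.ext e))
            (M.subtype_injective.isOfFinOrder_iff.mpr hf)
        have hcomm' : ⁅(⟨x, hxM⟩ : M) ^ n, (⟨c₁, hc₁M⟩ : M)⁆ = 1 := by
          have h1 : ⁅x ^ n, c₁⁆ = 1 := hxnc.commutator_eq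
          apply Subtype.ext
          simpa [commutatorElement_def] using h1
        have key' := ih hMbot (N.subgroupOf M) (hN.subgroupOf M) htf'
          ⟨x, hxM⟩ ⟨c₁, hc₁M⟩ (mem_subgroupOf.mpr hc₁N) n hn hcomm'
        have h1 := congrArg M.subtype key'
        simpa [commutatorElement_def] using h1
    -- conclude
    have hpow : c₁ ^ n = 1 := by
      rw [hc₁def, ← comm_pow_of_commute x y key n, h]
    by_contra hne
    exact hNtf c₁ hc₁N hne (isOfFinOrder_iff_pow_eq_one.mpr ⟨n, hn, hpow⟩)

theorem stmt_0 {G : Type*} [Group G] [Group.IsNilpotent G]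
    (N : Subgroup G) (hN : N.Normal)
    (hNtf : ∀ y ∈ N, y ≠ 1 → ¬ IsOfFinOrder y)
    (x : G) (y : G) (hy : y ∈ N) (n : ℕ) (hn : 0 < n)
    (h : ⁅x ^ n, y⁆ = 1) : ⁅x, y⁆ = 1 := by
  obtain ⟨c, hc⟩ := Subgroup.nilpotent_iff_lowerCentralSeries.mp ‹Group.IsNilpotent G›
  exact aux c hc N hN hNtf x y hy n hn h
end

section
/- Let G be a nilpotent group with G = Z_i(G)·H for a subgroup H and some i ≥ 1, where Z_i(G) is the i-th term of the upper central series. Then γ_{i+1}(H) = γ_{i+1}(G), where γ_j denotes the lower central series. -/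
open Subgroup Pointwise
open scoped commutatorElement

/-- Three subgroups lemma with normal target. -/
private lemma three_subgroups' {G : Type*} [Group G] (H₁ H₂ H₃ K : Subgroup G) [K.Normal]
    (h1 : ⁅⁅H₂, H₃⁆, H₁⁆ ≤ K) (h2 : ⁅⁅H₃, H₁⁆, H₂⁆ ≤ K) : ⁅⁅H₁, H₂⁆, H₃⁆ ≤ K := by
  let f := QuotientGroup.mk' K
  have hker : f.ker = K := QuotientGroup.ker_mk' K
  have hmap : ∀ A B C : Subgroup G, ⁅⁅A, B⁆, C⁆ ≤ K →
      ⁅⁅Subgroup.map f A, Subgroup.map f B⁆, Subgroup.map f C⁆ = ⊥ := by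
    intro A B C h
    rw [← Subgroup.map_commutator, ← Subgroup.map_commutator, Subgroup.map_eq_bot_iff, hker]
    exact h
  have := Subgroup.commutator_commutator_eq_bot_of_rotate (hmap _ _ _ h1) (hmap _ _ _ h2)
  rw [← Subgroup.map_commutator, ← Subgroup.map_commutator, Subgroup.map_eq_bot_iff, hker] at this
  exact this

private lemma ucs_comm_top {G : Type*} [Group G] (i : ℕ) :
    ⁅Subgroup.upperCentralSeries G i, (⊤ : Subgroup G)⁆ ≤ Subgroup.upperCentralSeries G (i - 1) := by
  cases i with
  | zero => simp [Subgroup.upperCentralSeries_zero]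
  | succ k =>
    refine Subgroup.commutator_le.mpr fun x hx y _ => ?_
    simpa [commutatorElement_def, mul_assoc] using Subgroup.mem_upperCentralSeries_succ_iff.mp hx y

private lemma ucs_comm_lcs {G : Type*} [Group G] (j : ℕ) :
    ∀ i : ℕ, ⁅Subgroup.upperCentralSeries G i, (⊤ : Subgroup G).lowerCentralSeries j⁆ ≤
      Subgroup.upperCentralSeries G (i - (j + 1)) := by
  induction j with
  | zero => intro i; simpa using ucs_comm_top (G := G) i
  | succ j ih =>
    intro i
    have h : (⊤ : Subgroup G).lowerCentralSeries (j + 1) = ⁅(⊤ : Subgroup G).lowerCentralSeries j, (⊤ : Subgroup G)⁆ := rfl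
    rw [h, Subgroup.commutator_comm]
    refine three_subgroups' _ _ _ _ ?_ ?_
    · -- ⁅⁅⊤, Z_i⁆, lcs j⁆ ≤ Z (i - (j+2))
      calc ⁅⁅(⊤ : Subgroup G), Subgroup.upperCentralSeries G i⁆, (⊤ : Subgroup G).lowerCentralSeries j⁆
          ≤ ⁅Subgroup.upperCentralSeries G (i - 1), (⊤ : Subgroup G).lowerCentralSeries j⁆ := by
            apply Subgroup.commutator_mono _ le_rfl
            rw [Subgroup.commutator_comm]
            exact ucs_comm_top i
        _ ≤ Subgroup.upperCentralSeries G (i - 1 - (j + 1)) := ih (i - 1)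
        _ ≤ Subgroup.upperCentralSeries G (i - (j + 1 + 1)) := by
            apply Subgroup.upperCentralSeries_mono; omega
    · -- ⁅⁅Z_i, lcs j⁆, ⊤⁆ ≤ Z (i - (j+2))
      calc ⁅⁅Subgroup.upperCentralSeries G i, (⊤ : Subgroup G).lowerCentralSeries j⁆, (⊤ : Subgroup G)⁆
          ≤ ⁅Subgroup.upperCentralSeries G (i - (j + 1)), (⊤ : Subgroup G)⁆ :=
            Subgroup.commutator_mono (ih i) le_rfl
        _ ≤ Subgroup.upperCentralSeries G (i - (j + 1) - 1) := ucs_comm_top _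
        _ ≤ Subgroup.upperCentralSeries G (i - (j + 1 + 1)) := by
            apply Subgroup.upperCentralSeries_mono; omega

/-- If `G = Z_i(G)·H` then `γ_{i+1}(H) = γ_{i+1}(G)`.
Note `(⊤ : Subgroup G).lowerCentralSeries i` is `γ_{i+1}(G)` (indexing starts at `γ_1 = G` for index 0). -/
theorem stmt_2 {G : Type*} [Group G] [Group.IsNilpotent G]
    (H : Subgroup G) (i : ℕ) (hi : 1 ≤ i)
    (hGH : ∀ g : G, ∃ z ∈ Subgroup.upperCentralSeries G i, ∃ h ∈ H, g = z * h) :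
    Subgroup.map H.subtype ((⊤ : Subgroup H).lowerCentralSeries i) = (⊤ : Subgroup G).lowerCentralSeries i := by
  set M : ℕ → Subgroup G := fun j => Subgroup.map H.subtype ((⊤ : Subgroup H).lowerCentralSeries j) with hM
  have hMle : ∀ j, M j ≤ (⊤ : Subgroup G).lowerCentralSeries j :=
    fun j => Subgroup.lowerCentralSeries_map_subtype_le H j
  have key : ∀ j, j ≤ i → (⊤ : Subgroup G).lowerCentralSeries j ≤ M j ⊔ Subgroup.upperCentralSeries G (i - j) := by
    intro j
    induction j with
    | zero =>
      intro _ g _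
      obtain ⟨z, hz, h, hh, rfl⟩ := hGH g
      have hzmem : z ∈ M 0 ⊔ Subgroup.upperCentralSeries G (i - 0) := by
        apply le_sup_right (α := Subgroup G)
        simpa using hz
      have hhmem : h ∈ M 0 ⊔ Subgroup.upperCentralSeries G (i - 0) :=
        le_sup_left (α := Subgroup G) ⟨⟨h, hh⟩, mem_top _, rfl⟩
      exact mul_mem hzmem hhmem
    | succ j ih =>
      intro hj
      have ihj := ih (by omega)
      have hdef : (⊤ : Subgroup G).lowerCentralSeries (j + 1) = ⁅(⊤ : Subgroup G).lowerCentralSeries j, (⊤ : Subgroup G)⁆ := rfl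
      rw [hdef]
      set T : Subgroup G := M (j + 1) ⊔ Subgroup.upperCentralSeries G (i - (j + 1)) with hT
      have hZT : Subgroup.upperCentralSeries G (i - (j + 1)) ≤ T := le_sup_right
      refine Subgroup.commutator_le.mpr fun g hg c _ => ?_
      -- decompose g
      have hg' : g ∈ ((M j : Set G) * (Subgroup.upperCentralSeries G (i - j) : Set G)) := by
        rw [← Subgroup.mul_normal]
        exact ihj hg
      obtain ⟨h, hh, z, hz, rfl⟩ := hg'
      obtain ⟨z', hz', h', hh', rfl⟩ := hGH c
      set c := z' * h' with hc
      -- first split: ⁅h*z, c⁆ = (h * ⁅z,c⁆ * h⁻¹) * ⁅h,c⁆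
      have e1 : ⁅h * z, c⁆ = (h * ⁅z, c⁆ * h⁻¹) * ⁅h, c⁆ := by group
      have hzc : ⁅z, c⁆ ∈ Subgroup.upperCentralSeries G (i - (j + 1)) := by
        have : ⁅z, c⁆ ∈ ⁅Subgroup.upperCentralSeries G (i - j), (⊤ : Subgroup G)⁆ :=
          Subgroup.commutator_mem_commutator hz (mem_top c)
        have := ucs_comm_top (G := G) (i - j) this
        exact Subgroup.upperCentralSeries_mono G (by omega) this
      have hconj : h * ⁅z, c⁆ * h⁻¹ ∈ Subgroup.upperCentralSeries G (i - (j + 1)) :=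
        (inferInstance : (Subgroup.upperCentralSeries G (i - (j + 1))).Normal).conj_mem _ hzc h
      -- second split: ⁅h, z'*h'⁆ = ⁅h,z'⁆ * (⁅z', ⁅h,h'⁆⁆ * ⁅h,h'⁆)
      have e2 : ⁅h, z' * h'⁆ = ⁅h, z'⁆ * (⁅z', ⁅h, h'⁆⁆ * ⁅h, h'⁆) := by group
      have hhlcs : h ∈ (⊤ : Subgroup G).lowerCentralSeries j := hMle j hh
      have hhz' : ⁅h, z'⁆ ∈ Subgroup.upperCentralSeries G (i - (j + 1)) := by
        have : ⁅z', h⁆ ∈ ⁅Subgroup.upperCentralSeries G i, (⊤ : Subgroup G).lowerCentralSeries j⁆ :=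
          Subgroup.commutator_mem_commutator hz' hhlcs
        have h2 := ucs_comm_lcs (G := G) j i this
        have : ⁅h, z'⁆ = ⁅z', h⁆⁻¹ := by group
        rw [this]
        exact inv_mem h2
      have hhh' : ⁅h, h'⁆ ∈ M (j + 1) := by
        obtain ⟨a, ha, rfl⟩ := hh
        refine ⟨⁅a, ⟨h', hh'⟩⁆, Subgroup.commutator_mem_commutator ha (mem_top _), ?_⟩
        simp [commutatorElement_def]
      have hz'comm : ⁅z', ⁅h, h'⁆⁆ ∈ Subgroup.upperCentralSeries G (i - (j + 1)) := by
        have : ⁅z', ⁅h, h'⁆⁆ ∈ ⁅Subgroup.upperCentralSeries G i, (⊤ : Subgroup G).lowerCentralSeries (j + 1)⁆ :=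
          Subgroup.commutator_mem_commutator hz' (hMle (j + 1) hhh')
        have h2 := ucs_comm_lcs (G := G) (j + 1) i this
        exact Subgroup.upperCentralSeries_mono G (by omega) h2
      -- assemble
      have hhc : ⁅h, c⁆ ∈ T := by
        rw [hc, e2]
        exact mul_mem (hZT hhz') (mul_mem (hZT hz'comm) (le_sup_left (α := Subgroup G) hhh'))
      rw [e1]
      exact mul_mem (hZT hconj) hhc
  refine le_antisymm (hMle i) ?_
  have := key i le_rfl
  simpa [hM] using this
end

section
/- Let G be a torsion-free nilpotent group, H a subgroup of finite index. Then H ∩ Z(G) = Z(H), where Z denotes the center. -/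
/-- If the commutator of `g` and `x` is central, then `⁅g^n, x⁆ = ⁅g,x⁆^n`. -/
lemma aux_comm_pow {Q : Type*} [Group Q] (g x : Q)
    (h : g * x * g⁻¹ * x⁻¹ ∈ Subgroup.center Q) (n : ℕ) :
    g ^ n * x * (g ^ n)⁻¹ = (g * x * g⁻¹ * x⁻¹) ^ n * x := by
  induction n with
  | zero => simp
  | succ n ih =>
    have hc : g ^ n * (g * x * g⁻¹ * x⁻¹) = (g * x * g⁻¹ * x⁻¹) * g ^ n :=
      Subgroup.mem_center_iff.mp h (g ^ n)
    calc g ^ (n + 1) * x * (g ^ (n + 1))⁻¹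
        = g ^ n * (g * x * g⁻¹ * x⁻¹) * (x * (g ^ n)⁻¹) := by group
      _ = (g * x * g⁻¹ * x⁻¹) * g ^ n * (x * (g ^ n)⁻¹) := by rw [hc]
      _ = (g * x * g⁻¹ * x⁻¹) * (g ^ n * x * (g ^ n)⁻¹) := by group
      _ = (g * x * g⁻¹ * x⁻¹) * ((g * x * g⁻¹ * x⁻¹) ^ n * x) := by rw [ih]
      _ = (g * x * g⁻¹ * x⁻¹) ^ (n + 1) * x := by rw [pow_succ']; group

/-- Descent along the upper central series in a torsion-free group. -/
lemma aux_descent {G : Type*} [Group G] (htf : ∀ g : G, g ≠ 1 → ¬IsOfFinOrder g)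
    {n : ℕ} (hn : n ≠ 0) :
    ∀ k (g : G), g ∈ Subgroup.upperCentralSeries G (k + 1) →
      g ^ n ∈ Subgroup.upperCentralSeries G k → g ∈ Subgroup.upperCentralSeries G k := by
  intro k
  induction k with
  | zero =>
    intro g _ hgn
    rw [Subgroup.upperCentralSeries_zero, Subgroup.mem_bot] at hgn ⊢
    by_contra h1
    exact htf g h1 (isOfFinOrder_iff_pow_eq_one.mpr ⟨n, Nat.pos_of_ne_zero hn, hgn⟩)
  | succ k ih =>
    intro g hg1 hgn
    rw [Subgroup.mem_upperCentralSeries_succ_iff]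
    intro x
    set c := g * x * g⁻¹ * x⁻¹ with hc_def
    have hc1 : c ∈ Subgroup.upperCentralSeries G (k + 1) :=
      Subgroup.mem_upperCentralSeries_succ_iff.mp hg1 x
    -- show c ^ n ∈ Subgroup.upperCentralSeries G k by working in the quotient
    have hcn : c ^ n ∈ Subgroup.upperCentralSeries G k := by
      set N := Subgroup.upperCentralSeries G k with hN
      let π : G →* G ⧸ N := QuotientGroup.mk' N
      have hker : ∀ z : G, z ∈ N → π z = 1 := fun z hz =>
        (QuotientGroup.eq_one_iff z).mpr hz
      -- π c is central
      have hcenter : π c ∈ Subgroup.center (G ⧸ N) := by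
        rw [Subgroup.mem_center_iff]
        intro q
        induction q using QuotientGroup.induction_on with
        | H y =>
          have h2 : c * y * c⁻¹ * y⁻¹ ∈ N := Subgroup.mem_upperCentralSeries_succ_iff.mp hc1 y
          have h3 : π c * π y * (π c)⁻¹ * (π y)⁻¹ = 1 := by
            rw [← map_inv, ← map_inv, ← map_mul, ← map_mul, ← map_mul]
            exact hker _ h2
          have h4 : π c * π y = π y * π c := by
            calc π c * π y = (π c * π y * (π c)⁻¹ * (π y)⁻¹) * (π y * π c) := by group
              _ = 1 * (π y * π c) := by rw [h3]
              _ = π y * π c := one_mul _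
          exact h4.symm
      -- commutator of g^n with x is trivial in the quotient
      have hgn' : (g ^ n) * x * (g ^ n)⁻¹ * x⁻¹ ∈ N :=
        Subgroup.mem_upperCentralSeries_succ_iff.mp hgn x
      have h5 : (π g) ^ n * π x * ((π g) ^ n)⁻¹ * (π x)⁻¹ = 1 := by
        rw [← map_pow, ← map_inv, ← map_inv, ← map_mul, ← map_mul, ← map_mul]
        exact hker _ hgn'
      have hcq : π g * π x * (π g)⁻¹ * (π x)⁻¹ = π c := by
        simp only [hc_def, map_mul, map_inv]
      have h6 : (π g) ^ n * π x * ((π g) ^ n)⁻¹ = (π c) ^ n * π x := by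
        have := aux_comm_pow (π g) (π x) (by rw [hcq]; exact hcenter) n
        rw [hcq] at this
        exact this
      have h7 : (π c) ^ n = 1 := by
        rw [h6] at h5
        rwa [mul_assoc, mul_inv_cancel, mul_one] at h5
      have h9 : π (c ^ n) = 1 := by rw [map_pow]; exact h7
      exact (QuotientGroup.eq_one_iff _).mp h9
    exact ih c hc1 hcn

/-- In a torsion-free nilpotent group, if a power of `g` is central then `g` is central. -/
lemma aux_pow_central {G : Type*} [Group G] [Group.IsNilpotent G]
    (htf : ∀ g : G, g ≠ 1 → ¬IsOfFinOrder g) {n : ℕ} (hn : n ≠ 0) (g : G)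
    (hg : g ^ n ∈ Subgroup.center G) : g ∈ Subgroup.center G := by
  obtain ⟨c, hc⟩ := Group.IsNilpotent.nilpotent (G := G)
  have key : ∀ j, ∀ h : G, h ^ n ∈ Subgroup.center G →
      h ∈ Subgroup.upperCentralSeries G (j + 1) → h ∈ Subgroup.center G := by
    intro j
    induction j with
    | zero => intro h _ hh; rwa [Subgroup.upperCentralSeries_one] at hh
    | succ j ih =>
      intro h hhn hh
      have hcen : h ^ n ∈ Subgroup.upperCentralSeries G (j + 1) := by
        have h1 : Subgroup.center G ≤ Subgroup.upperCentralSeries G (j + 1) := by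
          rw [← Subgroup.upperCentralSeries_one]
          exact Subgroup.upperCentralSeries_mono G (Nat.le_add_left 1 j)
        exact h1 hhn
      exact ih h hhn (aux_descent htf hn (j + 1) h hh hcen)
  have hgtop : g ∈ Subgroup.upperCentralSeries G (c + 1) := by
    have h2 : Subgroup.upperCentralSeries G c ≤ Subgroup.upperCentralSeries G (c + 1) :=
      Subgroup.upperCentralSeries_mono G (Nat.le_succ c)
    rw [hc] at h2
    exact h2 (Subgroup.mem_top g)
  exact key c g hg hgtop

/-- In a torsion-free nilpotent group, commuting with a positive power implies commuting. -/
lemma aux_commute_of_pow {G : Type*} [Group G] [Group.IsNilpotent G]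
    (htf : ∀ g : G, g ≠ 1 → ¬IsOfFinOrder g) {n : ℕ} (hn : n ≠ 0) (a b : G)
    (h : Commute (a ^ n) b) : Commute a b := by
  set C := Subgroup.centralizer ({a ^ n} : Set G) with hC
  have haC : a ∈ C := Subgroup.mem_centralizer_iff.mpr (by
    rintro y hy
    simp only [Set.mem_singleton_iff] at hy
    subst hy
    exact ((Commute.refl a).pow_left n).eq)
  have hbC : b ∈ C := Subgroup.mem_centralizer_iff.mpr (by
    rintro y hy
    simp only [Set.mem_singleton_iff] at hy
    subst hy
    exact h.eq)
  have hCtf : ∀ g : C, g ≠ 1 → ¬IsOfFinOrder g := fun g hg hfin =>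
    htf g (fun h1 => hg (Subtype.ext h1)) (Submonoid.isOfFinOrder_coe.mpr hfin)
  set aa : C := ⟨a, haC⟩
  set bb : C := ⟨b, hbC⟩
  have hcen : aa ^ n ∈ Subgroup.center C := by
    rw [Subgroup.mem_center_iff]
    intro w
    have hw : (w : G) ∈ Subgroup.centralizer ({a ^ n} : Set G) := w.2
    have h1 := Subgroup.mem_centralizer_iff.mp hw (a ^ n) rfl
    ext
    push_cast
    exact h1.symm
  have h2 : aa ∈ Subgroup.center C := aux_pow_central hCtf hn aa hcen
  have hco := Subgroup.mem_center_iff.mp h2 bb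
  have hG : b * a = a * b := congrArg Subtype.val hco
  exact hG.symm

theorem stmt_6 {G : Type*} [Group G] [Group.IsNilpotent G]
    (htf : ∀ g : G, g ≠ 1 → ¬IsOfFinOrder g)
    (H : Subgroup G) (hH : H.FiniteIndex) :
    H ⊓ Subgroup.center G = Subgroup.map H.subtype (Subgroup.center H) := by
  apply le_antisymm
  · rintro g hg
    obtain ⟨hgH, hgZ⟩ := Subgroup.mem_inf.mp hg
    refine Subgroup.mem_map.mpr ⟨⟨g, hgH⟩, ?_, rfl⟩
    exact Subgroup.mem_center_iff.mpr fun w =>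
      Subtype.ext (Subgroup.mem_center_iff.mp hgZ (w : G))
  · rintro g hg
    obtain ⟨w, hw, rfl⟩ := Subgroup.mem_map.mp hg
    refine Subgroup.mem_inf.mpr ⟨w.2, Subgroup.mem_center_iff.mpr fun x => ?_⟩
    obtain ⟨m, hm_pos, _, hmH⟩ := Subgroup.exists_pow_mem_of_index_ne_zero hH.index_ne_zero x
    have hcomm : Commute (x ^ m) (w : G) := by
      have h3 := Subgroup.mem_center_iff.mp hw ⟨x ^ m, hmH⟩
      exact congrArg Subtype.val h3
    exact (aux_commute_of_pow htf hm_pos.ne' x (w : G) hcomm).eq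
end

section
/- Let G be a torsion-free nilpotent group, H ≤ G of finite index, and f : H → G a homomorphism with trivial f-core(H) (no nontrivial subgroup K of H that is normal in G and satisfies f(K) ≤ K). Then f is injective. -/
open Subgroup

private lemma aux_conj_pow_eq {M : Type*} [Group M] {c y g : M} (hc : c ∈ Subgroup.center M)
    (h : y * g * y⁻¹ = c * g) (n : ℕ) : y ^ n * g * (y ^ n)⁻¹ = c ^ n * g := by
  induction n with
  | zero => simp
  | succ n ih =>
    have : y ^ (n + 1) * g * (y ^ (n + 1))⁻¹ = y * (y ^ n * g * (y ^ n)⁻¹) * y⁻¹ := by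
      group
    rw [this, ih]
    have hcy : y * c ^ n = c ^ n * y := Subgroup.mem_center_iff.mp (pow_mem hc n) y
    calc y * (c ^ n * g) * y⁻¹ = c ^ n * (y * g * y⁻¹) := by
          rw [← mul_assoc, ← mul_assoc, hcy, mul_assoc (c ^ n), mul_assoc (c ^ n)]
      _ = c ^ n * (c * g) := by rw [h]
      _ = c ^ (n + 1) * g := by rw [pow_succ, mul_assoc]
      
private lemma ucs_isolated_step {G : Type*} [Group G] (htf : ∀ g : G, g ≠ 1 → ¬IsOfFinOrder g) :
    ∀ (k : ℕ) (y : G) (n : ℕ), n ≠ 0 → y ∈ Subgroup.upperCentralSeries G (k + 1) →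
      y ^ n ∈ Subgroup.upperCentralSeries G k → y ∈ Subgroup.upperCentralSeries G k := by
  intro k
  induction k with
  | zero =>
    intro y n hn _ hyn
    rw [Subgroup.upperCentralSeries_zero, Subgroup.mem_bot] at *
    by_contra hy1
    exact htf y hy1 (isOfFinOrder_iff_pow_eq_one.mpr ⟨n, Nat.pos_of_ne_zero hn, hyn⟩)
  | succ k ih =>
    intro y n hn hy hyn
    rw [Subgroup.mem_upperCentralSeries_succ_iff]
    intro g
    set c : G := y * g * y⁻¹ * g⁻¹ with hc_def
    have hc : c ∈ Subgroup.upperCentralSeries G (k + 1) := Subgroup.mem_upperCentralSeries_succ_iff.mp hy g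
    apply ih c n hn hc
    -- show c ^ n ∈ upperCentralSeries G k using the quotient by Z_k
    set N := Subgroup.upperCentralSeries G k with hN
    haveI : N.Normal := inferInstance
    set π : G →* G ⧸ N := QuotientGroup.mk' N with hπ
    have hcen : π c ∈ Subgroup.center (G ⧸ N) := by
      rw [Subgroup.mem_center_iff]
      intro b
      obtain ⟨g', rfl⟩ := QuotientGroup.mk'_surjective N b
      show π g' * π c = π c * π g'
      have h1 : c⁻¹ * g'⁻¹ * (c⁻¹)⁻¹ * (g'⁻¹)⁻¹ ∈ N :=
        Subgroup.mem_upperCentralSeries_succ_iff.mp (inv_mem hc) g'⁻¹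
      have h2 : π (c⁻¹ * g'⁻¹ * (c⁻¹)⁻¹ * (g'⁻¹)⁻¹) = 1 := by
        rwa [← MonoidHom.mem_ker, QuotientGroup.ker_mk']
      simp only [map_mul, map_inv, inv_inv] at h2
      have h3 := congrArg (fun z => (π g') * ((π c) * z)) h2
      simpa [mul_assoc] using h3.symm
    have hconj : π y * π g * (π y)⁻¹ = π c * π g := by
      simp only [← map_inv, ← map_mul]
      congr 1
      rw [hc_def]; group
    have hpow := aux_conj_pow_eq hcen hconj n
    have hyng : y ^ n * g * (y ^ n)⁻¹ * g⁻¹ ∈ N := Subgroup.mem_upperCentralSeries_succ_iff.mp hyn g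
    have hq1 : π (y ^ n * g * (y ^ n)⁻¹ * g⁻¹) = 1 := by
      rwa [← MonoidHom.mem_ker, QuotientGroup.ker_mk']
    have hcn1 : π (c ^ n) = 1 := by
      have e1 : (π c) ^ n = (π y) ^ n * π g * ((π y) ^ n)⁻¹ * (π g)⁻¹ := by
        rw [hpow]; group
      rw [map_pow, e1]
      simp only [← map_pow, ← map_inv, ← map_mul]
      exact hq1
    have : c ^ n ∈ (QuotientGroup.mk' N).ker := MonoidHom.mem_ker.mpr hcn1
    rwa [QuotientGroup.ker_mk'] at this

private lemma ucs_isolated {G : Type*} [Group G] [Group.IsNilpotent G]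
    (htf : ∀ g : G, g ≠ 1 → ¬IsOfFinOrder g) (j : ℕ) (y : G) (n : ℕ) (hn : n ≠ 0)
    (hyn : y ^ n ∈ Subgroup.upperCentralSeries G j) : y ∈ Subgroup.upperCentralSeries G j := by
  have key : ∀ d : ℕ, y ∈ Subgroup.upperCentralSeries G (j + d) → y ∈ Subgroup.upperCentralSeries G j := by
    intro d
    induction d with
    | zero => exact fun h => h
    | succ d ih =>
      intro h
      exact ih (ucs_isolated_step htf (j + d) y n hn h
        (Subgroup.upperCentralSeries_mono G (Nat.le_add_right j d) hyn))
  apply key (Group.nilpotencyClass G)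
  exact Subgroup.upperCentralSeries_mono G (Nat.le_add_left _ j)
    (Subgroup.upperCentralSeries_nilpotencyClass (G := G) ▸ Subgroup.mem_top y)

private lemma quot_center_torsionFree {G : Type*} [Group G] [Group.IsNilpotent G]
    (htf : ∀ g : G, g ≠ 1 → ¬IsOfFinOrder g) :
    ∀ g : G ⧸ Subgroup.center G, g ≠ 1 → ¬IsOfFinOrder g := by
  intro q hq hfin
  obtain ⟨y, rfl⟩ := QuotientGroup.mk'_surjective (Subgroup.center G) q
  obtain ⟨n, hnpos, hpow⟩ := isOfFinOrder_iff_pow_eq_one.mp hfin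
  have h1 : y ^ n ∈ Subgroup.center G := by
    rw [← QuotientGroup.eq_one_iff]
    rw [← map_pow] at hpow
    exact hpow
  have h2 : y ∈ Subgroup.center G := by
    have := ucs_isolated htf 1 y n (Nat.pos_iff_ne_zero.mp hnpos)
      (by rwa [Subgroup.upperCentralSeries_one])
    rwa [Subgroup.upperCentralSeries_one] at this
  exact hq (QuotientGroup.eq_one_iff y |>.mpr h2)

private lemma unique_roots {G : Type*} [Group G] [Group.IsNilpotent G]
    (htf : ∀ g : G, g ≠ 1 → ¬IsOfFinOrder g) {x y : G} {n : ℕ} (hn : n ≠ 0)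
    (h : x ^ n = y ^ n) : x = y := by
  revert htf x y n
  refine nilpotent_center_quotient_ind
    (P := fun G _ _ => (∀ g : G, g ≠ 1 → ¬IsOfFinOrder g) →
      ∀ {x y : G} {n : ℕ}, n ≠ 0 → x ^ n = y ^ n → x = y) G ?_ ?_
  · intro G _ _ _ x y n _ _
    exact Subsingleton.elim x y
  · intro G _ _ ih htf x y n hn h
    have hq : (QuotientGroup.mk' (Subgroup.center G)) x ^ n
        = (QuotientGroup.mk' (Subgroup.center G)) y ^ n := by
      rw [← map_pow, ← map_pow, h]
    have hxy := ih (quot_center_torsionFree htf) hn hq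
    have hz : x⁻¹ * y ∈ Subgroup.center G := QuotientGroup.eq.mp hxy
    set z := x⁻¹ * y with hz_def
    have hy : y = x * z := by rw [hz_def]; group
    have hzn : z ^ n = 1 := by
      have hcomm : ∀ w : G, w * z = z * w := fun w => (Subgroup.mem_center_iff.mp hz w)
      have : (x * z) ^ n = x ^ n * z ^ n := by
        have hcxz : Commute x z := hcomm x
        exact hcxz.mul_pow n
      rw [hy, this] at h
      have := mul_left_cancel (a := x ^ n) (by rw [← h, mul_one] : x ^ n * z ^ n = x ^ n * 1)
      exact this
    by_contra hne
    have hz1 : z ≠ 1 := fun h1 => hne (by rw [hy, h1, mul_one])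
    exact htf z hz1 (isOfFinOrder_iff_pow_eq_one.mpr ⟨n, Nat.pos_of_ne_zero hn, hzn⟩)

private lemma normal_meets_center {G : Type*} [Group G] [Group.IsNilpotent G]
    (N : Subgroup G) [N.Normal] (hN : N ≠ ⊥) :
    ∃ x : G, x ∈ N ∧ x ∈ Subgroup.center G ∧ x ≠ 1 := by
  have key : ∀ i : ℕ, N ⊓ Subgroup.upperCentralSeries G i ≠ ⊥ →
      ∃ x : G, x ∈ N ∧ x ∈ Subgroup.center G ∧ x ≠ 1 := by
    intro i
    induction i with
    | zero => intro h; rw [Subgroup.upperCentralSeries_zero, inf_bot_eq] at h; exact absurd rfl h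
    | succ i ih =>
      intro h
      by_cases hi : N ⊓ Subgroup.upperCentralSeries G i = ⊥
      · obtain ⟨⟨x, hx⟩, hx1⟩ := (Subgroup.ne_bot_iff_exists_ne_one.mp h)
        have hx1' : x ≠ 1 := fun he => hx1 (Subtype.ext he)
        refine ⟨x, hx.1, ?_, hx1'⟩
        rw [Subgroup.mem_center_iff]
        intro g
        have hc : (x : G) * g * x⁻¹ * g⁻¹ ∈ Subgroup.upperCentralSeries G i :=
          Subgroup.mem_upperCentralSeries_succ_iff.mp hx.2 g
        have hcN : (x : G) * g * x⁻¹ * g⁻¹ ∈ N := by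
          have h1 : g * x⁻¹ * g⁻¹ ∈ N := Subgroup.Normal.conj_mem ‹N.Normal› _ (inv_mem hx.1) g
          have := mul_mem hx.1 h1
          simpa [mul_assoc] using this
        have : (x : G) * g * x⁻¹ * g⁻¹ ∈ N ⊓ Subgroup.upperCentralSeries G i := ⟨hcN, hc⟩
        rw [hi, Subgroup.mem_bot] at this
        have := mul_eq_one_iff_eq_inv.mp this
        calc g * x = (x * g * x⁻¹) * x := by rw [this]; group
          _ = x * g := by group
      · exact ih hi
  apply key (Group.nilpotencyClass G)
  rwa [Subgroup.upperCentralSeries_nilpotencyClass, inf_top_eq]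

theorem stmt_9 {G : Type*} [Group G] [Group.IsNilpotent G]
    (htf : ∀ g : G, g ≠ 1 → ¬IsOfFinOrder g)
    (H : Subgroup G) (hH : H.FiniteIndex) (f : H →* G)
    (hsimple : ∀ K : Subgroup G, (hKH : K ≤ H) → K.Normal →
      (∀ x : G, (hx : x ∈ K) → f ⟨x, hKH hx⟩ ∈ K) → K = ⊥) :
    Function.Injective f := by
  rw [← MonoidHom.ker_eq_bot_iff]
  by_contra hne
  haveI : Group.IsNilpotent ↥H := Subgroup.isNilpotent H
  have htfH : ∀ g : ↥H, g ≠ 1 → ¬IsOfFinOrder g :=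
    fun g hg hfin => htf g (fun h => hg (Subtype.ext h)) (Submonoid.isOfFinOrder_coe.mpr hfin)
  obtain ⟨x, hxker, hxc, hx1⟩ := normal_meets_center f.ker hne
  -- x is central in G
  have hxcG : (x : G) ∈ Subgroup.center G := by
    rw [Subgroup.mem_center_iff]
    intro g
    set n := H.normalCore.index with hn_def
    haveI : H.normalCore.FiniteIndex := Subgroup.finiteIndex_normalCore H
    have hn : n ≠ 0 := Subgroup.FiniteIndex.index_ne_zero
    have hgn : g ^ n ∈ H := H.normalCore_le (H.normalCore.pow_index_mem g)
    have hcomm : (x : G) * g ^ n = g ^ n * (x : G) := by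
      have h0 := Subgroup.mem_center_iff.mp hxc ⟨g ^ n, hgn⟩
      exact congrArg Subtype.val h0.symm
    have hconjpow : ((x : G) * g * (x : G)⁻¹) ^ n = g ^ n := by
      rw [conj_pow]
      calc (x : G) * g ^ n * (x : G)⁻¹ = g ^ n * (x : G) * (x : G)⁻¹ := by rw [hcomm]
        _ = g ^ n := by group
    have := unique_roots htf hn hconjpow
    calc g * (x : G) = (x : G) * ((x : G)⁻¹ * g * (x : G)) := by group
      _ = (x : G) * g := by
          congr 1
          have h5 := congrArg (fun w => (x : G)⁻¹ * w * (x : G)) this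
          simpa [mul_assoc] using h5.symm
  set K := Subgroup.zpowers (x : G) with hK_def
  have hKH : K ≤ H := Subgroup.zpowers_le.mpr x.2
  have hKnorm : K.Normal := by
    constructor
    intro k hk g
    have : g * k = k * g := Subgroup.mem_center_iff.mp (Subgroup.zpowers_le.mpr hxcG hk) g
    have : g * k * g⁻¹ = k := by rw [this]; group
    rwa [this]
  have hKf : ∀ w : G, (hw : w ∈ K) → f ⟨w, hKH hw⟩ ∈ K := by
    intro w hw
    obtain ⟨m, rfl⟩ := Subgroup.mem_zpowers_iff.mp hw
    have hsub : (⟨(x : G) ^ m, hKH hw⟩ : ↥H) = x ^ m := by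
      ext; simp
    rw [hsub, map_zpow]
    have hfx : f x = 1 := hxker
    rw [hfx, one_zpow]
    exact one_mem K
  have := hsimple K hKH hKnorm hKf
  have hxK : (x : G) ∈ K := Subgroup.mem_zpowers _
  rw [this, Subgroup.mem_bot] at hxK
  exact hx1 (Subtype.ext hxK)
end

section
/- Let G be a nilpotent group, H ≤ G of finite index m, f : H → G a homomorphism, and L = f-core(H) the maximal subgroup of H normal in G with f(L) ≤ L. Then ker(f) ≤ √[H]{L} = {h ∈ H : h^n ∈ L for some n ≥ 1}. -/
open Subgroup
open scoped commutatorElement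

section FD

/-- forward difference operator on integer sequences -/
private def FDiff (u : ℕ → ℤ) : ℕ → ℤ := fun n => u (n + 1) - u n

private lemma fd_const {u : ℕ → ℤ} (h : ∀ n, FDiff u n = 0) : ∀ n, u n = u 0 := by
  intro n
  induction n with
  | zero => rfl
  | succ n ih => have := h n; simp only [FDiff] at this; omega

private lemma const_of_periodic {k : ℕ} (hk : 0 < k) :
    ∀ (c : ℕ) (u : ℕ → ℤ), FDiff^[c] u = 0 → (∀ n, u (n + k) = u n) → ∀ n, u n = u 0 := by
  intro c
  induction c with
  | zero =>
    intro u h _ n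
    have h0 := congrFun h n
    have h1 := congrFun h 0
    simp only [Function.iterate_zero, id_eq, Pi.zero_apply] at h0 h1
    omega
  | succ c ih =>
    intro u h hper n
    have hFD : FDiff^[c] (FDiff u) = 0 := by
      rw [← Function.iterate_succ_apply]; exact h
    have hperFD : ∀ n, (FDiff u) (n + k) = FDiff u n := by
      intro n
      simp only [FDiff]
      have e1 : n + k + 1 = n + 1 + k := by omega
      rw [e1, hper (n + 1), hper n]
    have hconst : ∀ n, FDiff u n = FDiff u 0 := ih (FDiff u) hFD hperFD
    set C := FDiff u 0 with hC
    have hlin : ∀ n, u n = u 0 + n * C := by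
      intro n
      induction n with
      | zero => simp
      | succ n ihn =>
        have := hconst n
        simp only [FDiff] at this
        push_cast
        have : u (n+1) = u n + C := by omega
        rw [this, ihn]; push_cast; ring
    have hkC : (k : ℤ) * C = 0 := by
      have h2 := hper 0
      rw [zero_add, hlin k, hlin 0] at h2
      push_cast at h2
      omega
    have hC0 : C = 0 := by
      rcases mul_eq_zero.mp hkC with h' | h'
      · exfalso; have : (k:ℤ) ≠ 0 := by exact_mod_cast hk.ne'
        exact this h'
      · exact h'
    rw [hlin n, hC0]; ring

private lemma seq_zero {k : ℕ} (hk : 0 < k) :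
    ∀ (c : ℕ) (u : ℕ → ℤ), FDiff^[c] u = 0 → (∀ i, u (i * k) = 0) → ∀ n, u n = 0 := by
  intro c
  induction c with
  | zero => intro u h _ n; exact congrFun h n
  | succ c ih =>
    intro u h hz n
    have h1 : ∀ m, FDiff^[c] u m = FDiff^[c] u 0 := by
      apply fd_const
      intro m
      have := congrFun h m
      rw [Function.iterate_succ_apply'] at this
      exact this
    set b : ℕ → ℤ := fun m => u (m + k) - u m with hb
    have hbsub : ∀ j m, FDiff^[j] b m = FDiff^[j] u (m + k) - FDiff^[j] u m := by
      intro j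
      induction j with
      | zero => intro m; rfl
      | succ j ihj =>
        intro m
        rw [Function.iterate_succ_apply', Function.iterate_succ_apply']
        simp only [FDiff, ihj]
        have e1 : m + 1 + k = m + k + 1 := by omega
        rw [e1]; ring
    have hFb : FDiff^[c] b = 0 := by
      funext m
      rw [hbsub c m, h1 (m + k), h1 m]
      simp
    have hzb : ∀ i, b (i * k) = 0 := by
      intro i
      simp only [hb]
      have e1 : i * k + k = (i + 1) * k := by ring
      rw [e1, hz (i+1), hz i]; ring
    have hper : ∀ m, u (m + k) = u m := by
      intro m
      have := ih b hFb hzb m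
      simp only [hb] at this
      omega
    have hconst := const_of_periodic hk (c+1) u h hper
    have h0 : u 0 = 0 := by have := hz 0; simpa using this
    rw [hconst n, h0]

end FD

section Tower

variable {G : Type*} [Group G]

private lemma conj_mem_lcs {n : ℕ} {d : G} (hd : d ∈ Subgroup.lowerCentralSeries (⊤ : Subgroup G) n) (g : G) :
    g * d * g⁻¹ ∈ Subgroup.lowerCentralSeries (⊤ : Subgroup G) n :=
  (Subgroup.lowerCentralSeries_normal ⊤ n).conj_mem d hd g

private lemma conj_mem_lcs' {n : ℕ} {d : G} (hd : d ∈ Subgroup.lowerCentralSeries (⊤ : Subgroup G) n) (g : G) :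
    g⁻¹ * d * g ∈ Subgroup.lowerCentralSeries (⊤ : Subgroup G) n := by
  simpa using conj_mem_lcs hd g⁻¹

private lemma comm_mem_lcs_left {i : ℕ} {a : G} (ha : a ∈ Subgroup.lowerCentralSeries (⊤ : Subgroup G) i) (b : G) :
    ⁅a, b⁆ ∈ Subgroup.lowerCentralSeries (⊤ : Subgroup G) (i + 1) :=
  Subgroup.commutator_mem_commutator ha (Subgroup.mem_top b)

private lemma comm_mem_lcs_right {i : ℕ} {b : G} (hb : b ∈ Subgroup.lowerCentralSeries (⊤ : Subgroup G) i) (a : G) :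
    ⁅a, b⁆ ∈ Subgroup.lowerCentralSeries (⊤ : Subgroup G) (i + 1) := by
  have := inv_mem (comm_mem_lcs_left hb a)
  rwa [commutatorElement_inv] at this

/-- key product-power lemma: corrections to `(a*b)^N = a^N * b^N` lie one
level deeper in the lower central series, provided `b` does. -/
private lemma mul_pow_lcs {i : ℕ} (a b : G) (hb : b ∈ Subgroup.lowerCentralSeries (⊤ : Subgroup G) i) (N : ℕ) :
    ∃ d ∈ Subgroup.lowerCentralSeries (⊤ : Subgroup G) (i + 1), (a * b) ^ N = a ^ N * b ^ N * d := by
  induction N with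
  | zero => exact ⟨1, one_mem _, by simp⟩
  | succ N ih =>
    obtain ⟨d, hd, hEq⟩ := ih
    refine ⟨b⁻¹ * (⁅(b ^ N)⁻¹, a⁻¹⁆ * (a⁻¹ * d * a)) * b, ?_, ?_⟩
    · exact conj_mem_lcs' (mul_mem (comm_mem_lcs_left (inv_mem (pow_mem hb N)) a⁻¹)
        (conj_mem_lcs' hd a)) b
    · rw [pow_succ, hEq]
      simp only [commutatorElement_def]
      group

/-- left-slot power bilinearity of commutators, modulo two levels deeper. -/
private lemma comm_pow_left_lcs {i : ℕ} {a : G} (ha : a ∈ Subgroup.lowerCentralSeries (⊤ : Subgroup G) i) (s : G) (e : ℕ) :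
    ∃ d ∈ Subgroup.lowerCentralSeries (⊤ : Subgroup G) (i + 2), ⁅a ^ e, s⁆ = ⁅a, s⁆ ^ e * d := by
  induction e with
  | zero => exact ⟨1, one_mem _, by simp⟩
  | succ e ih =>
    obtain ⟨d, hd, hEq⟩ := ih
    have hw : ⁅a, s⁆ ^ e ∈ Subgroup.lowerCentralSeries (⊤ : Subgroup G) (i + 1) := pow_mem (comm_mem_lcs_left ha s) e
    refine ⟨⁅a, s⁆⁻¹ * (⁅(⁅a, s⁆ ^ e)⁻¹, a⁆ * (a * d * a⁻¹)) * ⁅a, s⁆, ?_, ?_⟩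
    · exact conj_mem_lcs' (mul_mem (comm_mem_lcs_left (inv_mem hw) a) (conj_mem_lcs hd a)) _
    · have key : ⁅a ^ (e+1), s⁆ = a * ⁅a ^ e, s⁆ * a⁻¹ * ⁅a, s⁆ := by
        rw [pow_succ']
        simp only [commutatorElement_def]
        group
      rw [key, hEq, commutatorElement_def (⁅a, s⁆ ^ e)⁻¹ a]
      generalize ⁅a, s⁆ = w
      group

/-- right-slot power bilinearity of commutators, modulo two levels deeper. -/
private lemma comm_pow_right_lcs {i : ℕ} {a : G} (ha : a ∈ Subgroup.lowerCentralSeries (⊤ : Subgroup G) i) (s : G) (e : ℕ) :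
    ∃ d ∈ Subgroup.lowerCentralSeries (⊤ : Subgroup G) (i + 2), ⁅a, s ^ e⁆ = ⁅a, s⁆ ^ e * d := by
  induction e with
  | zero => exact ⟨1, one_mem _, by simp⟩
  | succ e ih =>
    obtain ⟨d, hd, hEq⟩ := ih
    have hw : ⁅a, s⁆ ^ e ∈ Subgroup.lowerCentralSeries (⊤ : Subgroup G) (i + 1) := pow_mem (comm_mem_lcs_left ha s) e
    refine ⟨⁅(⁅a, s⁆ ^ e)⁻¹, s⁆ * (s * d * s⁻¹), ?_, ?_⟩
    · exact mul_mem (comm_mem_lcs_left (inv_mem hw) s) (conj_mem_lcs hd s)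
    · have key : ⁅a, s ^ (e+1)⁆ = ⁅a, s⁆ * (s * ⁅a, s ^ e⁆ * s⁻¹) := by
        rw [pow_succ']
        simp only [commutatorElement_def]
        group
      rw [key, hEq, commutatorElement_def (⁅a, s⁆ ^ e)⁻¹ s]
      generalize ⁅a, s⁆ = w
      group

/-- special case of additivity of the lower central series:
`⁅G_p, G_1⁆ ≤ G_{p+2}`, elementwise, via the Hall–Witt identity. -/
private lemma comm_lcs_one {p : ℕ} {a w : G} (ha : a ∈ Subgroup.lowerCentralSeries (⊤ : Subgroup G) p)
    (hw : w ∈ Subgroup.lowerCentralSeries (⊤ : Subgroup G) 1) : ⁅a, w⁆ ∈ Subgroup.lowerCentralSeries (⊤ : Subgroup G) (p + 2) := by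
  have HW : ∀ b c : G, ⁅a, ⁅b, c⁆⁆ ∈ Subgroup.lowerCentralSeries (⊤ : Subgroup G) (p + 2) := by
    intro b c
    have T1 : ⁅c, ⁅a⁻¹, b⁻¹⁆⁆ ∈ Subgroup.lowerCentralSeries (⊤ : Subgroup G) (p + 2) :=
      comm_mem_lcs_right (comm_mem_lcs_left (inv_mem ha) b⁻¹) c
    have T2 : ⁅b⁻¹, ⁅c⁻¹, a⁆⁆ ∈ Subgroup.lowerCentralSeries (⊤ : Subgroup G) (p + 2) :=
      comm_mem_lcs_right (comm_mem_lcs_right ha c⁻¹) b⁻¹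
    have key : ⁅a, ⁅b, c⁆⁆ =
        b * ((a * ⁅c, ⁅a⁻¹, b⁻¹⁆⁆⁻¹ * a⁻¹) * (c * ⁅b⁻¹, ⁅c⁻¹, a⁆⁆⁻¹ * c⁻¹)) * b⁻¹ := by
      simp only [commutatorElement_def]
      group
    rw [key]
    exact conj_mem_lcs (mul_mem (conj_mem_lcs (inv_mem T1) a) (conj_mem_lcs (inv_mem T2) c)) b
  rw [show (1 : ℕ) = 0 + 1 from rfl, Subgroup.lowerCentralSeries_succ] at hw
  induction hw using closure_induction with
  | mem g hg =>
    obtain ⟨bb, _, cc, _, hbc⟩ := hg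
    have : g = ⁅bb, cc⁆ := by rw [← hbc]
    rw [this]
    exact HW bb cc
  | one =>
    have : ⁅a, (1:G)⁆ = 1 := commutatorElement_one_right a
    rw [this]; exact one_mem _
  | mul g₁ g₂ h₁ h₂ m₁ m₂ =>
    have key : ⁅a, g₁ * g₂⁆ = ⁅a, g₁⁆ * (g₁ * ⁅a, g₂⁆ * g₁⁻¹) := by
      simp only [commutatorElement_def]; group
    rw [key]
    exact mul_mem m₁ (conj_mem_lcs m₂ g₁)
  | inv g hg m =>
    have key : ⁅a, g⁻¹⁆ = g⁻¹ * ⁅a, g⁆⁻¹ * g := by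
      simp only [commutatorElement_def]; group
    rw [key]
    exact conj_mem_lcs' (inv_mem m) g

end Tower
section Cascade

open Pointwise

variable {G : Type*} [Group G]

private lemma comm_mem_subgroup {T : Subgroup G} {u v : G} (hu : u ∈ T) (hv : v ∈ T) :
    ⁅u, v⁆ ∈ T := by
  rw [commutatorElement_def]
  exact mul_mem (mul_mem (mul_mem hu hv) (inv_mem hu)) (inv_mem hv)

private lemma cascade_Q (T : Subgroup G) (k : ℕ) (hk : 0 < k)
    (hbase : ∀ s : G, s ^ k ∈ T ⊔ Subgroup.lowerCentralSeries (⊤ : Subgroup G) 1) :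
    ∀ i : ℕ, ∃ E : ℕ, 0 < E ∧ ∀ g ∈ Subgroup.lowerCentralSeries (⊤ : Subgroup G) i,
      g ^ E ∈ (T ⊓ Subgroup.lowerCentralSeries (⊤ : Subgroup G) i) ⊔ Subgroup.lowerCentralSeries (⊤ : Subgroup G) (i + 1) := by
  intro i
  induction i with
  | zero =>
    refine ⟨k, hk, fun g _ => ?_⟩
    have := hbase g
    rwa [Subgroup.lowerCentralSeries_zero, inf_top_eq]
  | succ i ih =>
    obtain ⟨E, hE, hQ⟩ := ih
    refine ⟨E * k, Nat.mul_pos hE hk, ?_⟩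
    intro g hg
    rw [Subgroup.lowerCentralSeries_succ] at hg
    induction hg using closure_induction with
    | mem g hgen =>
      obtain ⟨a, ha, s, -, hcomm⟩ := hgen
      have hg' : g = ⁅a, s⁆ := by rw [← hcomm]
      -- step 1 : pull the powers inside the commutator
      obtain ⟨d₁, hd₁, h₁⟩ := comm_pow_left_lcs ha s E
      have q1 : ⁅a, s⁆ ^ E = ⁅a ^ E, s⁆ * d₁⁻¹ := by rw [h₁]; group
      obtain ⟨d₂, hd₂, h₂⟩ := mul_pow_lcs ⁅a ^ E, s⁆ d₁⁻¹
        (Subgroup.lowerCentralSeries_antitone ⊤ (Nat.le_succ (i+1)) (inv_mem hd₁)) k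
      obtain ⟨d₃, hd₃, h₃⟩ := comm_pow_right_lcs (pow_mem ha E) s k
      have q3 : ⁅a ^ E, s⁆ ^ k = ⁅a ^ E, s ^ k⁆ * d₃⁻¹ := by rw [h₃]; group
      have e0 : g ^ (E * k) = ⁅a ^ E, s ^ k⁆ * d₃⁻¹ * ((d₁⁻¹) ^ k * d₂) := by
        rw [hg', pow_mul, q1, h₂, q3]; group
      -- step 2 : decompose a^E and s^k
      have hmem1 : a ^ E ∈ ((T ⊓ Subgroup.lowerCentralSeries (⊤ : Subgroup G) i : Subgroup G) : Set G) *
          ((Subgroup.lowerCentralSeries (⊤ : Subgroup G) (i+1) : Subgroup G) : Set G) := by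
        rw [← Subgroup.mul_normal]
        exact_mod_cast hQ a ha
      obtain ⟨t₁, ht₁, g₁, hg₁, hdec1⟩ := hmem1
      have hmem2 : s ^ k ∈ ((T : Subgroup G) : Set G) *
          ((Subgroup.lowerCentralSeries (⊤ : Subgroup G) 1 : Subgroup G) : Set G) := by
        rw [← Subgroup.mul_normal]
        exact_mod_cast hbase s
      obtain ⟨t₂, ht₂, g₂, hg₂, hdec2⟩ := hmem2
      have ht₁T : t₁ ∈ T := ht₁.1
      have ht₁i : t₁ ∈ Subgroup.lowerCentralSeries (⊤ : Subgroup G) i := ht₁.2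
      -- step 3 : expand the commutator of products
      have expand : ⁅t₁ * g₁, t₂ * g₂⁆ =
          (t₁ * ⁅g₁, t₂ * g₂⁆ * t₁⁻¹) * (⁅t₁, t₂⁆ * (t₂ * ⁅t₁, g₂⁆ * t₂⁻¹)) := by
        simp only [commutatorElement_def]; group
      -- step 4 : memberships
      set V := (T ⊓ Subgroup.lowerCentralSeries (⊤ : Subgroup G) (i+1)) ⊔ Subgroup.lowerCentralSeries (⊤ : Subgroup G) (i + 2) with hV
      have hVr : Subgroup.lowerCentralSeries (⊤ : Subgroup G) (i+2) ≤ V := le_sup_right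
      have hVl : T ⊓ Subgroup.lowerCentralSeries (⊤ : Subgroup G) (i+1) ≤ V := le_sup_left
      have mA : t₁ * ⁅g₁, t₂ * g₂⁆ * t₁⁻¹ ∈ V :=
        hVr (conj_mem_lcs (comm_mem_lcs_left hg₁ _) t₁)
      have mB : ⁅t₁, t₂⁆ ∈ V :=
        hVl ⟨comm_mem_subgroup ht₁T ht₂, comm_mem_lcs_left ht₁i t₂⟩
      have mC : t₂ * ⁅t₁, g₂⁆ * t₂⁻¹ ∈ V :=
        hVr (conj_mem_lcs (comm_lcs_one ht₁i hg₂) t₂)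
      have mbig : ⁅a ^ E, s ^ k⁆ ∈ V := by
        rw [← hdec1, ← hdec2, expand]
        exact mul_mem mA (mul_mem mB mC)
      rw [e0]
      exact mul_mem (mul_mem mbig (hVr (inv_mem hd₃)))
        (mul_mem (hVr (pow_mem (inv_mem hd₁) k)) (hVr hd₂))
    | one => rw [one_pow]; exact one_mem _
    | mul g₁ g₂ hc₁ hc₂ m₁ m₂ =>
      have hg₂' : g₂ ∈ Subgroup.lowerCentralSeries (⊤ : Subgroup G) (i+1) := by
        rw [Subgroup.lowerCentralSeries_succ]; exact hc₂
      obtain ⟨d, hd, hEq⟩ := mul_pow_lcs g₁ g₂ hg₂' (E * k)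
      rw [hEq]
      exact mul_mem (mul_mem m₁ m₂) (Subgroup.mem_sup_right hd)
    | inv g hc m =>
      rw [inv_pow]
      exact inv_mem m

private lemma cascade_total (T : Subgroup G) (k : ℕ) (hk : 0 < k)
    (hbase : ∀ s : G, s ^ k ∈ T ⊔ Subgroup.lowerCentralSeries (⊤ : Subgroup G) 1)
    (c : ℕ) (hc : Subgroup.lowerCentralSeries (⊤ : Subgroup G) c = ⊥) :
    ∃ K : ℕ, 0 < K ∧ ∀ s : G, s ^ K ∈ T := by
  have main : ∀ i : ℕ, ∃ K : ℕ, 0 < K ∧ ∀ s : G, s ^ K ∈ T ⊔ Subgroup.lowerCentralSeries (⊤ : Subgroup G) i := by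
    intro i
    induction i with
    | zero =>
      refine ⟨1, one_pos, fun s => ?_⟩
      rw [Subgroup.lowerCentralSeries_zero, sup_top_eq]
      exact mem_top _
    | succ i ih =>
      obtain ⟨K, hK, hKs⟩ := ih
      obtain ⟨E, hE, hQ⟩ := cascade_Q T k hk hbase i
      refine ⟨K * E, Nat.mul_pos hK hE, fun s => ?_⟩
      have hmem : s ^ K ∈ ((T : Subgroup G) : Set G) *
          ((Subgroup.lowerCentralSeries (⊤ : Subgroup G) i : Subgroup G) : Set G) := by
        rw [← Subgroup.mul_normal]
        exact_mod_cast hKs s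
      obtain ⟨t, ht, g, hg, hdec⟩ := hmem
      obtain ⟨d, hd, hEq⟩ := mul_pow_lcs t g hg E
      have e0 : s ^ (K * E) = t ^ E * g ^ E * d := by rw [pow_mul, ← hdec, hEq]
      rw [e0]
      have m1 : t ^ E ∈ T ⊔ Subgroup.lowerCentralSeries (⊤ : Subgroup G) (i+1) :=
        Subgroup.mem_sup_left (pow_mem ht E)
      have hle : (T ⊓ Subgroup.lowerCentralSeries (⊤ : Subgroup G) i) ⊔ Subgroup.lowerCentralSeries (⊤ : Subgroup G) (i + 1) ≤
          T ⊔ Subgroup.lowerCentralSeries (⊤ : Subgroup G) (i+1) :=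
        sup_le_sup_right inf_le_left _
      have m2 : g ^ E ∈ T ⊔ Subgroup.lowerCentralSeries (⊤ : Subgroup G) (i+1) := hle (hQ g hg)
      exact mul_mem (mul_mem m1 m2) (Subgroup.mem_sup_right hd)
  obtain ⟨K, hK, hKs⟩ := main c
  refine ⟨K, hK, fun s => ?_⟩
  have := hKs s
  rwa [hc, sup_bot_eq] at this

end Cascade

section Core

variable {Γ : Type*} [Group Γ]

private lemma conj_pow_eq (g h : Γ) (n : ℕ) : (g * h * g⁻¹) ^ n = g * h ^ n * g⁻¹ := by
  induction n with
  | zero => simp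
  | succ n ih => rw [pow_succ, pow_succ, ih]; group

private lemma core_lemma [Group.IsNilpotent Γ] (x y : Γ) (k : ℕ) (hk : 0 < k)
    (hgen : Subgroup.closure ({x, y} : Set Γ) = ⊤) (M : Subgroup Γ)
    (hMp : ∀ u ∈ M, y ^ k * u * (y ^ k)⁻¹ ∈ M)
    (hMm : ∀ u ∈ M, (y ^ k)⁻¹ * u * y ^ k ∈ M)
    (hx : x ∈ M) :
    ∃ n : ℕ, 0 < n ∧ y * x ^ n * y⁻¹ ∈ M := by
  obtain ⟨c, hc⟩ := (Subgroup.nilpotent_iff_lowerCentralSeries (G := Γ)).mp inferInstance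
  set T := Subgroup.closure ({x, y ^ k} : Set Γ) with hT
  have hxT : x ∈ T := Subgroup.subset_closure (by simp)
  have hykT : y ^ k ∈ T := Subgroup.subset_closure (by simp)
  have hbase : ∀ s : Γ, s ^ k ∈ T ⊔ Subgroup.lowerCentralSeries (⊤ : Subgroup Γ) 1 := by
    intro s
    have hs : s ∈ Subgroup.closure ({x, y} : Set Γ) := by
      rw [hgen]; exact Subgroup.mem_top s
    induction hs using closure_induction with
    | mem g hg =>
      rcases hg with rfl | rfl
      · exact Subgroup.mem_sup_left (pow_mem hxT k)
      · exact Subgroup.mem_sup_left hykT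
    | one => rw [one_pow]; exact one_mem _
    | mul a b ha hb ma mb =>
      have hb0 : b ∈ Subgroup.lowerCentralSeries (⊤ : Subgroup Γ) 0 := by
        rw [Subgroup.lowerCentralSeries_zero]; exact Subgroup.mem_top b
      obtain ⟨d, hd, hEq⟩ := mul_pow_lcs a b hb0 k
      rw [hEq]
      exact mul_mem (mul_mem ma mb) (Subgroup.mem_sup_right hd)
    | inv a ha m => rw [inv_pow]; exact inv_mem m
  obtain ⟨K, hK, hKs⟩ := cascade_total T k hk hbase c hc
  set z := y ^ k with hz
  have Mzconj : ∀ t : ℤ, ∀ u ∈ M, z ^ t * u * (z ^ t)⁻¹ ∈ M := by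
    intro t
    induction t using Int.induction_on with
    | zero => intro u hu; simpa using hu
    | succ n ih =>
      intro u hu
      have h1 := ih _ (hMp u hu)
      have e : z ^ ((n : ℤ) + 1) * u * (z ^ ((n : ℤ) + 1))⁻¹ =
          z ^ (n : ℤ) * (z * u * z⁻¹) * (z ^ (n : ℤ))⁻¹ := by
        rw [zpow_add_one]; group
      rwa [e]
    | pred n ih =>
      intro u hu
      have h1 := ih _ (hMm u hu)
      have e : z ^ (-(n : ℤ) - 1) * u * (z ^ (-(n : ℤ) - 1))⁻¹ =
          z ^ (-(n : ℤ)) * (z⁻¹ * u * z) * (z ^ (-(n : ℤ)))⁻¹ := by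
        rw [zpow_sub_one]; group
      rwa [e]
  have decT : ∀ u ∈ T, ∃ s : ℤ, ∃ m ∈ M, u = m * z ^ s := by
    intro u hu
    induction hu using closure_induction with
    | mem g hg =>
      rcases hg with rfl | rfl
      · exact ⟨0, g, hx, by simp⟩
      · exact ⟨1, 1, one_mem M, by simp [hz]⟩
    | one => exact ⟨0, 1, one_mem M, by simp⟩
    | mul a b ha hb ma mb =>
      obtain ⟨s₁, m₁, hm₁, rfl⟩ := ma
      obtain ⟨s₂, m₂, hm₂, rfl⟩ := mb
      refine ⟨s₁ + s₂, m₁ * (z ^ s₁ * m₂ * (z ^ s₁)⁻¹),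
        mul_mem hm₁ (Mzconj s₁ m₂ hm₂), ?_⟩
      rw [zpow_add]; group
    | inv a ha m =>
      obtain ⟨s, m₁, hm₁, rfl⟩ := m
      refine ⟨-s, z ^ (-s) * m₁⁻¹ * (z ^ (-s))⁻¹, Mzconj (-s) m₁⁻¹ (inv_mem hm₁), ?_⟩
      group
  by_cases hBB : ∃ t : ℤ, t ≠ 0 ∧ z ^ t ∈ M
  · obtain ⟨t, ht0, htM⟩ := hBB
    have h1 : (y * x * y⁻¹) ^ K ∈ T := hKs _
    obtain ⟨s, m, hm, hEq⟩ := decT _ h1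
    have hpow : ∀ j : ℕ, ∃ m' ∈ M, (m * z ^ s) ^ j = m' * z ^ (s * (j : ℤ)) := by
      intro j
      induction j with
      | zero => exact ⟨1, one_mem M, by simp⟩
      | succ j ih =>
        obtain ⟨m', hm', hEq'⟩ := ih
        refine ⟨m * (z ^ s * m' * (z ^ s)⁻¹), mul_mem hm (Mzconj s m' hm'), ?_⟩
        rw [pow_succ', hEq',
          show (((j + 1 : ℕ)) : ℤ) = (j : ℤ) + 1 by push_cast; ring,
          show s * ((j : ℤ) + 1) = s * (j : ℤ) + s by ring, zpow_add]
        group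
    have hj0 : 0 < t.natAbs := Int.natAbs_pos.mpr ht0
    obtain ⟨m', hm', hEq'⟩ := hpow t.natAbs
    have hzmem : z ^ (s * (t.natAbs : ℤ)) ∈ M := by
      rcases Int.natAbs_eq t with h | h
      · have h2 : ((t.natAbs : ℤ)) = t := by omega
        have e : z ^ (s * (t.natAbs : ℤ)) = (z ^ t) ^ s := by
          rw [← zpow_mul, h2]; ring_nf
        rw [e]; exact zpow_mem htM s
      · have h2 : ((t.natAbs : ℤ)) = -t := by omega
        have e : z ^ (s * (t.natAbs : ℤ)) = (z ^ t) ^ (-s) := by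
          rw [← zpow_mul, h2]; ring_nf
        rw [e]; exact zpow_mem htM (-s)
    refine ⟨K * t.natAbs, Nat.mul_pos hK hj0, ?_⟩
    have e : y * x ^ (K * t.natAbs) * y⁻¹ = ((y * x * y⁻¹) ^ K) ^ t.natAbs := by
      rw [← pow_mul, conj_pow_eq]
    rw [e, hEq, hEq']
    exact mul_mem hm' hzmem
  · push_neg at hBB
    have hB : ∀ t : ℤ, z ^ t ∈ M → t = 0 := by
      intro t ht
      by_contra h
      exact hBB t h ht
    have huniq : ∀ (s₁ s₂ : ℤ) (m₁ m₂ : Γ), m₁ ∈ M → m₂ ∈ M →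
        m₁ * z ^ s₁ = m₂ * z ^ s₂ → s₁ = s₂ := by
      intro s₁ s₂ m₁ m₂ h₁ h₂ heq
      have e : m₂⁻¹ * m₁ = z ^ (s₂ - s₁) := by
        have e1 : m₁ = m₂ * z ^ s₂ * (z ^ s₁)⁻¹ := by rw [← heq]; group
        rw [e1, zpow_sub]; group
      have hmem : z ^ (s₂ - s₁) ∈ M := e ▸ mul_mem (inv_mem h₂) h₁
      have := hB _ hmem
      omega
    -- the subgroup D generated by all K-th powers
    set D := Subgroup.closure {g : Γ | ∃ s : Γ, s ^ K = g} with hD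
    have hDT : D ≤ T := by
      rw [hD]
      apply Subgroup.closure_le T |>.mpr
      rintro g ⟨s, rfl⟩
      exact hKs s
    have hDconj : ∀ g ∈ D, ∀ w : Γ, w * g * w⁻¹ ∈ D := by
      intro g hg
      induction hg using closure_induction with
      | mem g hgen =>
        intro w
        obtain ⟨s, rfl⟩ := hgen
        have e : w * s ^ K * w⁻¹ = (w * s * w⁻¹) ^ K := (conj_pow_eq w s K).symm
        rw [e]
        exact Subgroup.subset_closure ⟨w * s * w⁻¹, rfl⟩
      | one => intro w; simpa using one_mem _
      | mul a b ha hb ma mb =>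
        intro w
        have e : w * (a * b) * w⁻¹ = (w * a * w⁻¹) * (w * b * w⁻¹) := by group
        rw [e]
        exact mul_mem (ma w) (mb w)
      | inv a ha m =>
        intro w
        have e : w * a⁻¹ * w⁻¹ = (w * a * w⁻¹)⁻¹ := by group
        rw [e]
        exact inv_mem (m w)
    -- the commutator tower of x^K along y
    let δ : ℕ → Γ := fun j => Nat.rec (x ^ K) (fun _ w => ⁅y, w⁆) j
    have hδ0 : δ 0 = x ^ K := rfl
    have hδs : ∀ j, δ (j + 1) = ⁅y, δ j⁆ := fun j => rfl
    have hδlcs : ∀ j, δ j ∈ Subgroup.lowerCentralSeries (⊤ : Subgroup Γ) j := by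
      intro j
      induction j with
      | zero =>
        rw [hδ0]
        show x ^ K ∈ Subgroup.lowerCentralSeries (⊤ : Subgroup Γ) 0
        rw [Subgroup.lowerCentralSeries_zero]; exact Subgroup.mem_top _
      | succ j ih =>
        rw [hδs j]
        exact comm_mem_lcs_right ih y
    have hδD : ∀ j, δ j ∈ D := by
      intro j
      induction j with
      | zero =>
        rw [hδ0]
        exact Subgroup.subset_closure ⟨x, rfl⟩
      | succ j ih =>
        rw [hδs j]
        have e : ⁅y, δ j⁆ = (y * δ j * y⁻¹) * (δ j)⁻¹ := by
          exact commutatorElement_def y (δ j)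
        rw [e]
        exact mul_mem (hDconj _ ih y) (inv_mem ih)
    have hdec : ∀ j i : ℕ, ∃ s : ℤ, ∃ m ∈ M, y ^ i * δ j * (y ^ i)⁻¹ = m * z ^ s := by
      intro j i
      exact decT _ (hDT (hDconj _ (hδD j) (y ^ i)))
    choose A mm hmM hmEq using hdec
    have hrec : ∀ j i, A j (i + 1) = A (j + 1) i + A j i := by
      intro j i
      have hprod : y ^ (i + 1) * δ j * (y ^ (i + 1))⁻¹ =
          (y ^ i * δ (j + 1) * (y ^ i)⁻¹) * (y ^ i * δ j * (y ^ i)⁻¹) := by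
        rw [hδs j, commutatorElement_def, pow_succ]
        group
      rw [hmEq j (i + 1), hmEq (j + 1) i, hmEq j i] at hprod
      have e : mm (j+1) i * z ^ A (j+1) i * (mm j i * z ^ A j i) =
          (mm (j+1) i * (z ^ A (j+1) i * mm j i * (z ^ A (j+1) i)⁻¹)) *
            z ^ (A (j+1) i + A j i) := by
        rw [zpow_add]; group
      rw [e] at hprod
      exact huniq _ _ _ _ (hmM j (i+1))
        (mul_mem (hmM (j+1) i) (Mzconj _ _ (hmM j i))) hprod
    have htop : ∀ i, A c i = 0 := by
      intro i
      have hδc : δ c = 1 := by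
        have h0 := hδlcs c
        rw [hc] at h0
        exact Subgroup.mem_bot.mp h0
      have h0 := hmEq c i
      rw [hδc, mul_one, mul_inv_cancel] at h0
      have heq : (1 : Γ) * z ^ (0 : ℤ) = mm c i * z ^ A c i := by
        rw [zpow_zero, mul_one]; exact h0
      exact (huniq 0 (A c i) 1 (mm c i) (one_mem M) (hmM c i) heq).symm
    have hzero : ∀ i, A 0 (i * k) = 0 := by
      intro i
      have hmem : ∀ i : ℕ, y ^ (i * k) * x ^ K * (y ^ (i * k))⁻¹ ∈ M := by
        intro i
        induction i with
        | zero => simpa using pow_mem hx K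
        | succ i ih =>
          have e : y ^ ((i + 1) * k) * x ^ K * (y ^ ((i + 1) * k))⁻¹ =
              y ^ k * (y ^ (i * k) * x ^ K * (y ^ (i * k))⁻¹) * (y ^ k)⁻¹ := by
            have e2 : (i + 1) * k = k + i * k := by ring
            rw [e2, pow_add]
            group
          rw [e]
          exact hMp _ ih
      have h0 := hmEq 0 (i * k)
      rw [hδ0] at h0
      have heq : y ^ (i * k) * x ^ K * (y ^ (i * k))⁻¹ * z ^ (0 : ℤ) =
          mm 0 (i * k) * z ^ A 0 (i * k) := by
        rw [zpow_zero, mul_one]; exact h0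
      exact (huniq 0 (A 0 (i * k)) _ _ (hmem i) (hmM 0 (i * k)) heq).symm
    have hiter : ∀ j, FDiff^[j] (fun i => A 0 i) = fun i => A j i := by
      intro j
      induction j with
      | zero => rfl
      | succ j ihj =>
        rw [Function.iterate_succ_apply', ihj]
        funext i
        have := hrec j i
        simp only [FDiff]
        omega
    have hFD0 : FDiff^[c] (fun i => A 0 i) = 0 := by
      rw [hiter c]
      funext i
      exact htop i
    have hA01 : A 0 1 = 0 := seq_zero hk c (fun i => A 0 i) hFD0 hzero 1
    refine ⟨K, hK, ?_⟩
    have h0 := hmEq 0 1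
    rw [hδ0, hA01, zpow_zero, mul_one, pow_one] at h0
    rw [h0]
    exact hmM 0 1

end Core

private lemma conj_wrap {G : Type*} [Group G] [Group.IsNilpotent G] (M : Subgroup G)
    (x y : G) (k : ℕ) (hk : 0 < k)
    (hyp : ∀ u ∈ M, y ^ k * u * (y ^ k)⁻¹ ∈ M)
    (hym : ∀ u ∈ M, (y ^ k)⁻¹ * u * y ^ k ∈ M)
    (hx : x ∈ M) :
    ∃ n : ℕ, 0 < n ∧ y * x ^ n * y⁻¹ ∈ M := by
  have hxS : x ∈ Subgroup.closure ({x, y} : Set G) := Subgroup.subset_closure (by simp)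
  have hyS : y ∈ Subgroup.closure ({x, y} : Set G) := Subgroup.subset_closure (by simp)
  set S := Subgroup.closure ({x, y} : Set G) with hS
  set x' : S := ⟨x, hxS⟩ with hx'
  set y' : S := ⟨y, hyS⟩ with hy'
  have hgen : Subgroup.closure ({x', y'} : Set S) = ⊤ := by
    have h1 : (((↑) : S → G) ⁻¹' ({x, y} : Set G)) = ({x', y'} : Set S) := by
      ext a
      simp [Set.mem_preimage, Subtype.ext_iff, hx', hy']
    rw [← h1, hS]
    exact Subgroup.closure_closure_coe_preimage
  set M' := M.subgroupOf S with hM'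
  have hyp' : ∀ u ∈ M', y' ^ k * u * (y' ^ k)⁻¹ ∈ M' := by
    intro u hu
    rw [Subgroup.mem_subgroupOf] at hu ⊢
    have e : (↑(y' ^ k * u * (y' ^ k)⁻¹) : G) = y ^ k * ↑u * (y ^ k)⁻¹ := by
      push_cast [hy']
      rfl
    rw [e]
    exact hyp _ hu
  have hym' : ∀ u ∈ M', (y' ^ k)⁻¹ * u * y' ^ k ∈ M' := by
    intro u hu
    rw [Subgroup.mem_subgroupOf] at hu ⊢
    have e : (↑((y' ^ k)⁻¹ * u * y' ^ k) : G) = (y ^ k)⁻¹ * ↑u * y ^ k := by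
      push_cast [hy']
      rfl
    rw [e]
    exact hym _ hu
  have hxM' : x' ∈ M' := by
    rw [Subgroup.mem_subgroupOf]
    exact hx
  obtain ⟨n, hn, hmem⟩ := core_lemma x' y' k hk hgen M' hyp' hym' hxM'
  refine ⟨n, hn, ?_⟩
  rw [Subgroup.mem_subgroupOf] at hmem
  have e : (↑(y' * x' ^ n * y'⁻¹) : G) = y * x ^ n * y⁻¹ := by
    push_cast [hx', hy']
    rfl
  rwa [e] at hmem

theorem stmt_10 {G : Type*} [Group G] [Group.IsNilpotent G]
    (H : Subgroup G) (m : ℕ) (hm : H.index = m) (hmpos : 0 < m)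
    (f : H →* G)
    (L : Subgroup G) (hLH : L ≤ H) (hLnormal : L.Normal)
    (hLinv : ∀ x : G, (hx : x ∈ L) → f ⟨x, hLH hx⟩ ∈ L)
    (hLmax : ∀ K : Subgroup G, (hKH : K ≤ H) → K.Normal →
      (∀ x : G, (hx : x ∈ K) → f ⟨x, hKH hx⟩ ∈ K) → K ≤ L) :
    ∀ h : H, h ∈ f.ker → ∃ n : ℕ, 1 ≤ n ∧ (h : G) ^ n ∈ L := by
  intro h hker
  set Msub : Subgroup G := Subgroup.map H.subtype (L.comap f) with hMsub
  have hMH : Msub ≤ H := by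
    rintro u ⟨w, hw, rfl⟩
    exact w.2
  have hMmem : ∀ u : G, u ∈ Msub → ∃ hu : u ∈ H, f ⟨u, hu⟩ ∈ L := by
    rintro u ⟨w, hw, rfl⟩
    refine ⟨w.2, ?_⟩
    simp only [SetLike.mem_coe, Subgroup.mem_comap] at hw
    convert hw using 2
    rfl
  have hLM : L ≤ Msub := by
    intro u hu
    refine ⟨⟨u, hLH hu⟩, ?_, rfl⟩
    simp only [SetLike.mem_coe, Subgroup.mem_comap]
    exact hLinv u hu
  have hMnorm : ∀ η : G, η ∈ H → ∀ u ∈ Msub, η * u * η⁻¹ ∈ Msub := by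
    intro η hη u hu
    obtain ⟨w, hw, rfl⟩ := hu
    refine ⟨⟨η, hη⟩ * w * ⟨η, hη⟩⁻¹, ?_, rfl⟩
    simp only [SetLike.mem_coe, Subgroup.mem_comap] at hw ⊢
    rw [map_mul, map_mul, map_inv]
    exact hLnormal.conj_mem _ hw _
  have hhM : (h : G) ∈ Msub := by
    refine ⟨h, ?_, rfl⟩
    simp only [SetLike.mem_coe, Subgroup.mem_comap]
    rw [MonoidHom.mem_ker.mp hker]
    exact one_mem L
  set K : Subgroup G := ⨅ g : G, Msub.map (MulAut.conj g).toMonoidHom with hK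
  have hKmem : ∀ u : G, u ∈ K ↔ ∀ g : G, g⁻¹ * u * g ∈ Msub := by
    intro u
    rw [hK, Subgroup.mem_iInf]
    apply forall_congr'
    intro g
    rw [Subgroup.mem_map_equiv]
    constructor
    · intro hmem
      have e : (MulAut.conj g).symm u = g⁻¹ * u * g := by
        simp [MulAut.conj]
      rwa [e] at hmem
    · intro hmem
      have e : (MulAut.conj g).symm u = g⁻¹ * u * g := by
        simp [MulAut.conj]
      rwa [e]
  have hKMsub : K ≤ Msub := by
    intro u hu
    have := (hKmem u).mp hu 1
    simpa using this
  have hKH : K ≤ H := le_trans hKMsub hMH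
  have hKnormal : K.Normal := by
    constructor
    intro n hn g₀
    rw [hKmem]
    intro g
    have e : g⁻¹ * (g₀ * n * g₀⁻¹) * g = (g₀⁻¹ * g)⁻¹ * n * (g₀⁻¹ * g) := by group
    rw [e]
    exact (hKmem n).mp hn (g₀⁻¹ * g)
  have hLK : L ≤ K := by
    intro v hv
    rw [hKmem]
    intro g
    apply hLM
    have := hLnormal.conj_mem v hv g⁻¹
    simpa using this
  have hKinv : ∀ u : G, (hu : u ∈ K) → f ⟨u, hKH hu⟩ ∈ K := by
    intro u hu
    obtain ⟨hu', hfu⟩ := hMmem u (hKMsub hu)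
    exact hLK hfu
  have hKL : K ≤ L := hLmax K hKH hKnormal hKinv
  have hidx : H.index ≠ 0 := by rw [hm]; exact hmpos.ne'
  have hfin : Finite (G ⧸ H) := by
    have h1 : Nat.card (G ⧸ H) ≠ 0 := by
      rw [← Subgroup.index_eq_card]
      exact hidx
    exact (Nat.card_ne_zero.mp h1).2
  haveI := hfin
  haveI : Fintype (G ⧸ H) := Fintype.ofFinite _
  have hcoset : ∀ q : G ⧸ H, ∃ n : ℕ, 0 < n ∧
      (Quotient.out q)⁻¹ * (h : G) ^ n * Quotient.out q ∈ Msub := by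
    intro q
    set g₀ := Quotient.out q with hg₀
    obtain ⟨k, hk0, _, hkH⟩ := Subgroup.exists_pow_mem_of_index_ne_zero hidx g₀⁻¹
    have h1 : ∀ u ∈ Msub, (g₀⁻¹) ^ k * u * ((g₀⁻¹) ^ k)⁻¹ ∈ Msub :=
      fun u hu => hMnorm _ hkH u hu
    have h2 : ∀ u ∈ Msub, ((g₀⁻¹) ^ k)⁻¹ * u * (g₀⁻¹) ^ k ∈ Msub := by
      intro u hu
      have := hMnorm _ (inv_mem hkH) u hu
      simpa using this
    obtain ⟨n, hn, hmem⟩ := conj_wrap Msub ((h : G)) (g₀⁻¹) k hk0 h1 h2 hhM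
    refine ⟨n, hn, ?_⟩
    simpa using hmem
  choose nq hnq hmemq using hcoset
  refine ⟨∏ q : G ⧸ H, nq q, ?_, ?_⟩
  · have hp : 0 < ∏ q : G ⧸ H, nq q := Finset.prod_pos (fun q _ => hnq q)
    omega
  · apply hKL
    rw [hKmem]
    intro g
    set q : G ⧸ H := (g : G ⧸ H) with hq
    set g₀ := Quotient.out q with hg₀
    have hout : (g₀ : G ⧸ H) = q := QuotientGroup.out_eq' q
    have hη : g₀⁻¹ * g ∈ H := by
      rw [← QuotientGroup.eq]
      rw [hout, hq]
    set η := g₀⁻¹ * g with hηdef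
    have hdvd : nq q ∣ ∏ q : G ⧸ H, nq q :=
      Finset.dvd_prod_of_mem nq (Finset.mem_univ q)
    obtain ⟨r, hr⟩ := hdvd
    have e1 : (h : G) ^ (∏ q : G ⧸ H, nq q) = ((h : G) ^ nq q) ^ r := by
      rw [← pow_mul, hr]
    have e2 : g = g₀ * η := by rw [hηdef]; group
    have e3 : g⁻¹ * (h : G) ^ (∏ q : G ⧸ H, nq q) * g =
        η⁻¹ * (g₀⁻¹ * ((h : G) ^ nq q) ^ r * g₀) * η := by
      rw [e1, e2]; group
    rw [e3]
    have hin : g₀⁻¹ * ((h : G) ^ nq q) ^ r * g₀ ∈ Msub := by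
      have e4 : g₀⁻¹ * ((h : G) ^ nq q) ^ r * g₀ =
          (g₀⁻¹ * (h : G) ^ nq q * g₀) ^ r := by
        have := conj_pow_eq g₀⁻¹ ((h : G) ^ nq q) r
        simpa using this.symm
      rw [e4]
      exact pow_mem (hmemq q) r
    have := hMnorm η⁻¹ (inv_mem hη) _ hin
    simpa using this
end

section
/- Let G be a 2-generated torsion-free nilpotent group of class c. Then the derived subgroup equals the (c−1)-st upper central subgroup: G' = Z_{c−1}(G). -/
/-- The old Mathlib definition (removed since): a monoid is torsion-free if no element
other than `1` has finite order. -/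
def Monoid.IsTorsionFree (G : Type*) [Monoid G] : Prop :=
  ∀ g : G, g ≠ 1 → ¬IsOfFinOrder g

open QuotientGroup
open scoped commutatorElement

section Aux

variable {G : Type*} [Group G]

private lemma comm_mul_left (x v y : G) : ⁅x * v, y⁆ = x * ⁅v, y⁆ * x⁻¹ * ⁅x, y⁆ := by
  simp only [commutatorElement_def]; group

private lemma mk_comm (N : Subgroup G) [N.Normal] (u v : G) :
    ((⁅u, v⁆ : G) : G ⧸ N) = ⁅((u : G ⧸ N)), ((v : G ⧸ N))⁆ := by
  simp [commutatorElement_def]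

/-- The image of `Z_{k+1}` in `G ⧸ Z_k` is central. -/
private lemma mk_central (k : ℕ) (x : G) (hx : x ∈ Subgroup.upperCentralSeries G (k + 1)) :
    ((x : G ⧸ Subgroup.upperCentralSeries G k)) ∈ Subgroup.center (G ⧸ Subgroup.upperCentralSeries G k) := by
  rw [Subgroup.mem_center_iff]
  intro q
  induction q using QuotientGroup.induction_on with
  | _ w =>
    have h := Subgroup.mem_upperCentralSeries_succ_iff.mp (inv_mem hx) w⁻¹
    have : ((w * x : G) : G ⧸ Subgroup.upperCentralSeries G k) = ((x * w : G) : G ⧸ Subgroup.upperCentralSeries G k) := by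
      rw [QuotientGroup.eq]
      convert h using 1
      group
    simpa using this

private lemma central_comm_pow {Q : Type*} [Group Q] (x y : Q)
    (h : ⁅x, y⁆ ∈ Subgroup.center Q) : ∀ j : ℕ, ⁅x ^ j, y⁆ = ⁅x, y⁆ ^ j
  | 0 => by simp
  | j + 1 => by
    rw [pow_succ', comm_mul_left, central_comm_pow x y h j]
    have hc : ⁅x, y⁆ ^ j ∈ Subgroup.center Q := pow_mem h j
    rw [Subgroup.mem_center_iff] at hc
    rw [hc x, pow_succ]
    group

private lemma iso_step (htf : Monoid.IsTorsionFree G) :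
    ∀ (k : ℕ) (g : G) (j : ℕ), 0 < j → g ∈ Subgroup.upperCentralSeries G (k + 1) →
      g ^ j ∈ Subgroup.upperCentralSeries G k → g ∈ Subgroup.upperCentralSeries G k
  | 0, g, j, hj, _, hgj => by
    rw [Subgroup.upperCentralSeries_zero, Subgroup.mem_bot] at hgj ⊢
    by_contra hg
    exact htf g hg (isOfFinOrder_iff_pow_eq_one.mpr ⟨j, hj, hgj⟩)
  | k + 1, g, j, hj, hg, hgj => by
    rw [Subgroup.mem_upperCentralSeries_succ_iff]
    intro y
    have hgy1 : ⁅g, y⁆ ∈ Subgroup.upperCentralSeries G (k + 1) :=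
      Subgroup.mem_upperCentralSeries_succ_iff.mp hg y
    have key : ⁅g, y⁆ ^ j ∈ Subgroup.upperCentralSeries G k := by
      set N := Subgroup.upperCentralSeries G k with hN
      have hC : ((⁅g, y⁆ : G) : G ⧸ N) ∈ Subgroup.center (G ⧸ N) := mk_central k _ hgy1
      have hCq : ⁅((g : G ⧸ N)), ((y : G ⧸ N))⁆ ∈ Subgroup.center (G ⧸ N) :=
        mk_comm N g y ▸ hC
      have h1 : ((⁅g, y⁆ ^ j : G) : G ⧸ N) = ((⁅g ^ j, y⁆ : G) : G ⧸ N) := by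
        calc ((⁅g, y⁆ ^ j : G) : G ⧸ N) = ⁅((g : G ⧸ N)), ((y : G ⧸ N))⁆ ^ j := by
              rw [QuotientGroup.mk_pow, mk_comm]
          _ = ⁅((g : G ⧸ N)) ^ j, ((y : G ⧸ N))⁆ :=
              (central_comm_pow ((g : G ⧸ N)) ((y : G ⧸ N)) hCq j).symm
          _ = ((⁅g ^ j, y⁆ : G) : G ⧸ N) := by rw [mk_comm, QuotientGroup.mk_pow]
      have h3 : ⁅g ^ j, y⁆ ∈ N := Subgroup.mem_upperCentralSeries_succ_iff.mp hgj y
      rw [← QuotientGroup.eq_one_iff] at h3 ⊢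
      rw [h1, h3]
    exact iso_step htf k ⁅g, y⁆ j hj hgy1 key

private lemma isolated [Group.IsNilpotent G] (htf : Monoid.IsTorsionFree G)
    (k : ℕ) (g : G) (j : ℕ) (hj : 0 < j)
    (hgj : g ^ j ∈ Subgroup.upperCentralSeries G k) : g ∈ Subgroup.upperCentralSeries G k := by
  have hd : ∀ d, g ∈ Subgroup.upperCentralSeries G (k + d) → g ∈ Subgroup.upperCentralSeries G k := by
    intro d
    induction d with
    | zero => simpa using id
    | succ d ih =>
      intro h
      exact ih (iso_step htf (k + d) g j hj h
        (Subgroup.upperCentralSeries_mono G (Nat.le_add_right k d) hgj))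
  apply hd (Group.nilpotencyClass G)
  have htop := Subgroup.upperCentralSeries_nilpotencyClass (G := G)
  exact Subgroup.upperCentralSeries_mono G (Nat.le_add_left _ k) (htop ▸ Subgroup.mem_top g)

/-- Key step: a relation `a^m * b^n ∈ Z_{d+1}` with `n ≠ 0` forces `⁅b,a⁆ ∈ Z_d`. -/
private lemma comm_mem_of_rel [Group.IsNilpotent G] (htf : Monoid.IsTorsionFree G)
    (d : ℕ) (hcomm : commutator G ≤ Subgroup.upperCentralSeries G (d + 1))
    (a b : G) (m n : ℤ) (hn : n ≠ 0)
    (hz : a ^ m * b ^ n ∈ Subgroup.upperCentralSeries G (d + 1)) :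
    ⁅b, a⁆ ∈ Subgroup.upperCentralSeries G d := by
  set N := Subgroup.upperCentralSeries G d with hN
  have hba : ⁅b, a⁆ ∈ commutator G := by
    rw [commutator_def]
    exact Subgroup.commutator_mem_commutator (Subgroup.mem_top b) (Subgroup.mem_top a)
  have hC : ((⁅b, a⁆ : G) : G ⧸ N) ∈ Subgroup.center (G ⧸ N) := mk_central d _ (hcomm hba)
  have hCq : ⁅((b : G ⧸ N)), ((a : G ⧸ N))⁆ ∈ Subgroup.center (G ⧸ N) :=
    mk_comm N b a ▸ hC
  have hZc : ((a ^ m * b ^ n : G) : G ⧸ N) ∈ Subgroup.center (G ⧸ N) := mk_central d _ hz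
  -- A commutes with B^n
  have hBn : Commute ((a : G ⧸ N)) (((b : G ⧸ N)) ^ n) := by
    have h1 : ((b : G ⧸ N)) ^ n = ((a : G ⧸ N)) ^ (-m) * ((a ^ m * b ^ n : G) : G ⧸ N) := by
      have : ((a ^ m * b ^ n : G) : G ⧸ N)
          = ((a : G ⧸ N)) ^ m * ((b : G ⧸ N)) ^ n := by
        simp [QuotientGroup.mk_mul, QuotientGroup.mk_zpow]
      rw [this, zpow_neg, ← mul_assoc, inv_mul_cancel, one_mul]
    rw [h1]
    exact ((Commute.refl _).zpow_right (-m)).mul_right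
      (Subgroup.mem_center_iff.mp hZc _)
  set Nn := n.natAbs with hNn
  have hNpos : 0 < Nn := Int.natAbs_pos.mpr hn
  have hBN : Commute ((a : G ⧸ N)) (((b : G ⧸ N)) ^ Nn) := by
    rcases Int.natAbs_eq n with h | h
    · rw [← zpow_natCast, ← h]; exact hBn
    · rw [← zpow_natCast]
      have h2 : ((b : G ⧸ N)) ^ ((Nn : ℤ)) = (((b : G ⧸ N)) ^ n)⁻¹ := by
        rw [← zpow_neg]; congr 1; omega
      rw [h2]
      exact hBn.inv_right
  have h1 : (((⁅b, a⁆ : G) : G ⧸ N)) ^ Nn = 1 := by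
    have hp := central_comm_pow ((b : G ⧸ N)) ((a : G ⧸ N)) hCq Nn
    have h2 : ⁅((b : G ⧸ N)) ^ Nn, ((a : G ⧸ N))⁆ = 1 :=
      commutatorElement_eq_one_iff_commute.mpr hBN.symm
    calc (((⁅b, a⁆ : G) : G ⧸ N)) ^ Nn = ⁅((b : G ⧸ N)), ((a : G ⧸ N))⁆ ^ Nn := by
          rw [mk_comm]
      _ = ⁅((b : G ⧸ N)) ^ Nn, ((a : G ⧸ N))⁆ := hp.symm
      _ = 1 := h2
  have h2 : ⁅b, a⁆ ^ Nn ∈ N := by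
    rw [← QuotientGroup.eq_one_iff]
    simpa using h1
  exact isolated htf d _ Nn hNpos h2

end Aux

theorem stmt_14 {G : Type*} [Group G] [Group.IsNilpotent G]
    (htf : Monoid.IsTorsionFree G)
    (a b : G) (hgen : Subgroup.closure {a, b} = ⊤)
    (c : ℕ) (hc : Group.nilpotencyClass G = c) :
    commutator G = upperCentralSeries G (c - 1) := by
  show commutator G = Subgroup.upperCentralSeries G (c - 1)
  rcases Nat.eq_zero_or_pos c with hc0 | hcpos
  · -- trivial group
    have hsub : Subsingleton G := Group.nilpotencyClass_zero_iff_subsingleton.mp (by omega)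
    rw [hc0]
    simp only [Nat.zero_sub, Subgroup.upperCentralSeries_zero]
    rw [eq_bot_iff]
    intro x _
    rw [Subgroup.mem_bot]
    exact Subsingleton.elim x 1
  -- easy inclusion
  have hcomm : commutator G ≤ Subgroup.upperCentralSeries G (c - 1) := by
    have hbot : Subgroup.lowerCentralSeries (⊤ : Subgroup G) c = ⊥ :=
      hc ▸ Subgroup.lowerCentralSeries_nilpotencyClass
    have hasc := Subgroup.is_ascending_rev_series_of_is_descending (G := G) hbot
      Subgroup.lowerCentralSeries_isDescendingCentralSeries
    have := Subgroup.ascending_central_series_le_upper (fun m => Subgroup.lowerCentralSeries (⊤ : Subgroup G) (c - m)) hasc (c - 1)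
    have heq : c - (c - 1) = 1 := by omega
    rw [heq] at this
    simpa [commutator_def] using this
  refine le_antisymm hcomm ?_
  rcases Nat.lt_or_ge c 2 with hc1 | hc2
  · -- c = 1 : Z_0 = ⊥ ≤ commutator
    have : c - 1 = 0 := by omega
    rw [this, Subgroup.upperCentralSeries_zero]
    exact bot_le
  -- c = d + 2
  obtain ⟨d, rfl⟩ : ∃ d, c = d + 2 := ⟨c - 2, by omega⟩
  intro x hx
  have hd1 : d + 2 - 1 = d + 1 := by omega
  rw [hd1] at hx hcomm
  -- abelianization step
  have hab : ∃ m n : ℤ, a ^ m * b ^ n * x⁻¹ ∈ commutator G := by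
    have hgen' : Subgroup.closure ({Abelianization.of a, Abelianization.of b} :
        Set (Abelianization G)) = ⊤ := by
      rw [← Set.image_pair, ← MonoidHom.map_closure, hgen]
      exact Subgroup.map_top_of_surjective _ (QuotientGroup.mk'_surjective (commutator G))
    have hxmem : Abelianization.of x ∈ Subgroup.closure
        ({Abelianization.of a, Abelianization.of b} : Set (Abelianization G)) := by
      rw [hgen']; trivial
    obtain ⟨m, n, hmn⟩ := Subgroup.mem_closure_pair.mp hxmem
    refine ⟨m, n, ?_⟩
    rw [← QuotientGroup.eq_one_iff]
    show Abelianization.of (a ^ m * b ^ n * x⁻¹) = 1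
    rw [map_mul, map_mul, map_zpow, map_zpow, map_inv, hmn, mul_inv_cancel]
  obtain ⟨m, n, hw⟩ := hab
  have hzmem : a ^ m * b ^ n ∈ Subgroup.upperCentralSeries G (d + 1) := by
    have : a ^ m * b ^ n = (a ^ m * b ^ n * x⁻¹) * x := by group
    rw [this]
    exact mul_mem (hcomm hw) hx
  by_cases hmn0 : m = 0 ∧ n = 0
  · -- x ∈ commutator
    obtain ⟨hm0, hn0⟩ := hmn0
    rw [hm0, hn0] at hw
    simpa using (inv_mem hw : (a ^ (0:ℤ) * b ^ (0:ℤ) * x⁻¹)⁻¹ ∈ commutator G)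
  -- contradiction branch: some exponent nonzero
  exfalso
  have hcomm' : commutator G ≤ Subgroup.upperCentralSeries G (d + 1) := hcomm
  have hba : ⁅b, a⁆ ∈ Subgroup.upperCentralSeries G d ∨ ⁅a, b⁆ ∈ Subgroup.upperCentralSeries G d := by
    by_cases hn : n = 0
    · right
      have hm : m ≠ 0 := by tauto
      have hz' : b ^ n * a ^ m ∈ Subgroup.upperCentralSeries G (d + 1) := by
        have : b ^ n * a ^ m = (a ^ m)⁻¹ * (a ^ m * b ^ n) * a ^ m := by group
        rw [this]
        exact (inferInstance : (Subgroup.upperCentralSeries G (d + 1)).Normal).conj_mem' _ hzmem _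
      exact comm_mem_of_rel htf d hcomm' b a n m hm hz'
    · left
      exact comm_mem_of_rel htf d hcomm' a b m n hn hzmem
  have hba' : ⁅b, a⁆ ∈ Subgroup.upperCentralSeries G d := by
    rcases hba with h | h
    · exact h
    · rw [← commutatorElement_inv]
      exact inv_mem h
  -- now G ⧸ Z_d is abelian, contradiction with class = d+2
  set N := Subgroup.upperCentralSeries G d with hN
  have habel : ∀ u v : G, ⁅u, v⁆ ∈ N := by
    -- all elements of G/N commute
    set A : G ⧸ N := ((a : G ⧸ N)) with hA
    set B : G ⧸ N := ((b : G ⧸ N)) with hB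
    have hABcomm : Commute A B := by
      rw [← commutatorElement_eq_one_iff_commute, hA, hB]
      rw [← mk_comm, QuotientGroup.eq_one_iff]
      rw [← commutatorElement_inv]
      exact inv_mem hba'
    have hgenQ : Subgroup.closure ({A, B} : Set (G ⧸ N)) = ⊤ := by
      have h := Subgroup.map_top_of_surjective (QuotientGroup.mk' N)
        (QuotientGroup.mk'_surjective N)
      rw [← hgen, MonoidHom.map_closure, Set.image_pair] at h
      exact h
    have hstep1 : ∀ X : G ⧸ N, X ∈ Subgroup.centralizer ({A, B} : Set (G ⧸ N)) := by
      intro X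
      have : Subgroup.closure ({A, B} : Set (G ⧸ N)) ≤
          Subgroup.centralizer ({A, B} : Set (G ⧸ N)) := by
        rw [Subgroup.closure_le]
        intro g hg
        rcases hg with h | h
        · subst h
          rw [SetLike.mem_coe, Subgroup.mem_centralizer_iff]
          rintro h (rfl | rfl)
          · rfl
          · exact hABcomm.symm
        · rw [Set.mem_singleton_iff] at h
          subst h
          rw [SetLike.mem_coe, Subgroup.mem_centralizer_iff]
          rintro h (rfl | rfl)
          · exact hABcomm
          · rfl
      exact this (hgenQ ▸ Subgroup.mem_top X)
    have hcommQ : ∀ X Y : G ⧸ N, Commute X Y := by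
      intro X Y
      have hXA : Commute A X := Subgroup.mem_centralizer_iff.mp (hstep1 X) A (by simp)
      have hXB : Commute B X := Subgroup.mem_centralizer_iff.mp (hstep1 X) B (by simp)
      have : Subgroup.closure ({A, B} : Set (G ⧸ N)) ≤
          Subgroup.centralizer ({X} : Set (G ⧸ N)) := by
        rw [Subgroup.closure_le]
        intro g hg
        rcases hg with h | h
        · subst h
          rw [SetLike.mem_coe, Subgroup.mem_centralizer_iff]
          rintro h rfl
          exact hXA.symm
        · rw [Set.mem_singleton_iff] at h; subst h
          rw [SetLike.mem_coe, Subgroup.mem_centralizer_iff]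
          rintro h rfl
          exact hXB.symm
      have hY : Y ∈ Subgroup.centralizer ({X} : Set (G ⧸ N)) :=
        this (hgenQ ▸ Subgroup.mem_top Y)
      exact (Subgroup.mem_centralizer_iff.mp hY X (by simp))
    intro u v
    rw [← QuotientGroup.eq_one_iff]
    rw [mk_comm, commutatorElement_eq_one_iff_commute]
    exact hcommQ _ _
  have htop : Subgroup.upperCentralSeries G (d + 1) = ⊤ := by
    rw [eq_top_iff]
    intro u _
    rw [Subgroup.mem_upperCentralSeries_succ_iff]
    intro y
    exact habel u y
  have := Subgroup.upperCentralSeries_eq_top_iff_nilpotencyClass_le.mp htop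
  omega
end

section
/- Let G be a 2-generated torsion-free nilpotent group and H a proper normal subgroup of finite index in G that is isomorphic to G. Then G is abelian. -/
open Subgroup Pointwise
open scoped commutatorElement

private lemma comm1 {G : Type*} [Group G] (x y z : G) :
    ⁅x*y, z⁆ = (x * ⁅y,z⁆ * x⁻¹) * ⁅x,z⁆ := by group

private lemma comm2 {G : Type*} [Group G] (x y z : G) :
    ⁅x, y*z⁆ = ⁅x,y⁆ * (y * ⁅x,z⁆ * y⁻¹) := by group

private lemma comm3 {G : Type*} [Group G] (x y : G) :
    ⁅x⁻¹, y⁆ = x⁻¹ * ⁅x,y⁆⁻¹ * (x⁻¹)⁻¹ := by group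

private lemma comm4 {G : Type*} [Group G] (x y : G) :
    ⁅x, y⁻¹⁆ = y⁻¹ * ⁅x,y⁆⁻¹ * (y⁻¹)⁻¹ := by group

private lemma hL1top {G : Type*} [Group G] :
    (⊤ : Subgroup G).lowerCentralSeries 1 = ⁅(⊤ : Subgroup G), ⊤⁆ := by
  rw [Subgroup.lowerCentralSeries_succ, Subgroup.lowerCentralSeries_zero]

private lemma commElt_mem_lcs_succ {G : Type*} [Group G] {n : ℕ} {w : G}
    (hw : w ∈ (⊤ : Subgroup G).lowerCentralSeries n) (y : G) :
    ⁅w, y⁆ ∈ (⊤ : Subgroup G).lowerCentralSeries (n+1) := by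
  rw [Subgroup.lowerCentralSeries_succ]
  exact commutator_mem_commutator hw (mem_top y)

private lemma commElt_mem_L1 {G : Type*} [Group G] (x y : G) :
    ⁅x, y⁆ ∈ (⊤ : Subgroup G).lowerCentralSeries 1 :=
  commElt_mem_lcs_succ (by rw [Subgroup.lowerCentralSeries_zero]; trivial) y

private lemma central_lcs {G : Type*} [Group G] {n : ℕ} {w : G}
    (hw : w ∈ (⊤ : Subgroup G).lowerCentralSeries n) (y : G) :
    Commute ((QuotientGroup.mk' ((⊤ : Subgroup G).lowerCentralSeries (n+1))) w)
      ((QuotientGroup.mk' ((⊤ : Subgroup G).lowerCentralSeries (n+1))) y) := by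
  have h2 : (QuotientGroup.mk' ((⊤ : Subgroup G).lowerCentralSeries (n+1))) ⁅w, y⁆ = 1 := by
    rw [QuotientGroup.mk'_apply, QuotientGroup.eq_one_iff]
    exact commElt_mem_lcs_succ hw y
  rw [map_commutatorElement] at h2
  exact commutatorElement_eq_one_iff_commute.mp h2

private lemma conj_lcs {G : Type*} [Group G] {n : ℕ} {w : G}
    (hw : w ∈ (⊤ : Subgroup G).lowerCentralSeries n) (x : G) :
    (QuotientGroup.mk' ((⊤ : Subgroup G).lowerCentralSeries (n+1))) (x * w * x⁻¹)
      = (QuotientGroup.mk' ((⊤ : Subgroup G).lowerCentralSeries (n+1))) w := by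
  have hcomm := (central_lcs hw x).symm
  rw [map_mul, map_mul, map_inv]
  rw [Commute] at hcomm
  rw [hcomm.eq, mul_assoc, mul_inv_cancel, mul_one]

private lemma conj_L1 {G : Type*} [Group G] {w : G}
    (hw : w ∈ (⊤ : Subgroup G).lowerCentralSeries 1) (x : G) :
    (QuotientGroup.mk' ((⊤ : Subgroup G).lowerCentralSeries 2)) (x * w * x⁻¹)
      = (QuotientGroup.mk' ((⊤ : Subgroup G).lowerCentralSeries 2)) w :=
  conj_lcs hw x

/-- Key structural fact: for a 2-generated group, γ₂ ≤ ⟨[a,b]⟩ ⊔ γ₃. -/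
private lemma L1_le_zpowers_sup {G : Type*} [Group G] (a b : G)
    (hgen : Subgroup.closure {a, b} = ⊤) :
    (⊤ : Subgroup G).lowerCentralSeries 1 ≤ Subgroup.zpowers ⁅a, b⁆ ⊔ (⊤ : Subgroup G).lowerCentralSeries 2 := by
  set π := QuotientGroup.mk' ((⊤ : Subgroup G).lowerCentralSeries 2) with hπ
  have hmemtop : ∀ x : G, x ∈ Subgroup.closure ({a, b} : Set G) := by
    rw [hgen]; exact fun x => mem_top x
  have key : ∀ x y : G, π ⁅x, y⁆ ∈ Subgroup.zpowers (π ⁅a, b⁆) := by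
    intro x y
    induction hmemtop x, hmemtop y using Subgroup.closure_induction₂ with
    | mem u v hu hv =>
      simp only [Set.mem_insert_iff, Set.mem_singleton_iff] at hu hv
      have hba : π ⁅b, a⁆ = (π ⁅a, b⁆)⁻¹ := by rw [← map_inv, commutatorElement_inv]
      rcases hu with rfl | rfl <;> rcases hv with rfl | rfl
      · rw [commutatorElement_self, map_one]; exact one_mem _
      · exact Subgroup.mem_zpowers _
      · rw [hba]; exact inv_mem (Subgroup.mem_zpowers _)
      · rw [commutatorElement_self, map_one]; exact one_mem _
    | one_left x hx =>
      rw [show ⁅(1:G), x⁆ = 1 by group, map_one]; exact one_mem _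
    | one_right x hx =>
      rw [show ⁅x, (1:G)⁆ = 1 by group, map_one]; exact one_mem _
    | mul_left x y z hx hy hz h1 h2 =>
      rw [comm1, map_mul, conj_L1 (commElt_mem_L1 y z) x]
      exact mul_mem h2 h1
    | mul_right y z x hy hz hx h1 h2 =>
      rw [comm2, map_mul, conj_L1 (commElt_mem_L1 x z) y]
      exact mul_mem h1 h2
    | inv_left x y hx hy h =>
      rw [comm3, conj_L1 (inv_mem (commElt_mem_L1 x y)) x⁻¹, map_inv]
      exact inv_mem h
    | inv_right x y hx hy h =>
      rw [comm4, conj_L1 (inv_mem (commElt_mem_L1 x y)) y⁻¹, map_inv]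
      exact inv_mem h
  rw [hL1top, Subgroup.commutator_def, Subgroup.closure_le]
  rintro g ⟨g₁, -, g₂, -, rfl⟩
  obtain ⟨j, hj⟩ := Subgroup.mem_zpowers_iff.mp (key g₁ g₂)
  have hmem : (⁅a,b⁆ ^ j)⁻¹ * ⁅g₁, g₂⁆ ∈ (⊤ : Subgroup G).lowerCentralSeries 2 := by
    rw [← QuotientGroup.eq_one_iff, ← QuotientGroup.mk'_apply, ← hπ, map_mul, map_inv, map_zpow,
      hj]
    exact inv_mul_cancel _
  have hsplit : ⁅g₁, g₂⁆ = ⁅a,b⁆ ^ j * ((⁅a,b⁆ ^ j)⁻¹ * ⁅g₁, g₂⁆) := by group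
  rw [hsplit]
  exact mul_mem (Subgroup.mem_sup_left (Subgroup.mem_zpowers_iff.mpr ⟨j, rfl⟩))
    (Subgroup.mem_sup_right hmem)

/-- exponent propagation down the lower central series -/
private lemma lcs_pow_step {G : Type*} [Group G] (k : ℕ)
    (h1 : ∀ g ∈ (⊤ : Subgroup G).lowerCentralSeries 1, g ^ k ∈ (⊤ : Subgroup G).lowerCentralSeries 2) :
    ∀ i, 1 ≤ i → ∀ g ∈ (⊤ : Subgroup G).lowerCentralSeries i, g ^ k ∈ (⊤ : Subgroup G).lowerCentralSeries (i+1) := by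
  intro i
  induction i with
  | zero => omega
  | succ i ih =>
    intro _
    rcases Nat.eq_zero_or_pos i with rfl | hpos
    · exact h1
    · have hi : ∀ g ∈ (⊤ : Subgroup G).lowerCentralSeries i, g ^ k ∈ (⊤ : Subgroup G).lowerCentralSeries (i+1) :=
        ih hpos
      intro g hg
      have hgen : (⊤ : Subgroup G).lowerCentralSeries (i+1)
          = closure {x | ∃ p ∈ (⊤ : Subgroup G).lowerCentralSeries i, ∃ q ∈ (⊤ : Subgroup G), ⁅p,q⁆ = x} := by
        rw [Subgroup.lowerCentralSeries_succ]; rfl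
      rw [hgen] at hg
      set π := QuotientGroup.mk' ((⊤ : Subgroup G).lowerCentralSeries (i+2)) with hπdef
      induction hg using Subgroup.closure_induction with
      | mem x hx =>
        obtain ⟨p, hp, q, -, rfl⟩ := hx
        have key : ∀ m : ℕ, π (⁅p,q⁆ ^ m) = π ⁅p ^ m, q⁆ := by
          intro m
          induction m with
          | zero => simp [show ⁅(1:G), q⁆ = 1 by group]
          | succ m ihm =>
            have h1' : ⁅p ^ (m+1), q⁆ = (p * ⁅p ^ m, q⁆ * p⁻¹) * ⁅p, q⁆ := by
              rw [pow_succ']; exact comm1 p (p^m) q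
            have hmem : ⁅p ^ m, q⁆ ∈ (⊤ : Subgroup G).lowerCentralSeries (i+1) :=
              commElt_mem_lcs_succ (pow_mem hp m) q
            rw [h1', map_mul, conj_lcs hmem p, ← ihm, pow_succ, map_mul]
        have hfin : ⁅p ^ k, q⁆ ∈ (⊤ : Subgroup G).lowerCentralSeries (i+2) :=
          commElt_mem_lcs_succ (hi p hp) q
        have hone : π (⁅p,q⁆ ^ k) = 1 := by
          rw [key k, QuotientGroup.mk'_apply, QuotientGroup.eq_one_iff]
          exact hfin
        rw [QuotientGroup.mk'_apply, QuotientGroup.eq_one_iff] at hone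
        exact hone
      | one => simpa using ((⊤ : Subgroup G).lowerCentralSeries (i+2)).one_mem
      | mul x y hx hy ihx ihy =>
        have hx' : x ∈ (⊤ : Subgroup G).lowerCentralSeries (i+1) := hgen ▸ hx
        have hc : Commute (π x) (π y) := central_lcs hx' y
        have hsplit : π ((x*y) ^ k) = π (x ^ k) * π (y ^ k) := by
          rw [map_pow, map_mul, hc.mul_pow, map_pow, map_pow]
        have h2 : π ((x*y) ^ k) = 1 := by
          rw [hsplit, QuotientGroup.mk'_apply, QuotientGroup.mk'_apply,
            (QuotientGroup.eq_one_iff (x ^ k)).mpr ihx,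
            (QuotientGroup.eq_one_iff (y ^ k)).mpr ihy, one_mul]
        rw [QuotientGroup.mk'_apply, QuotientGroup.eq_one_iff] at h2
        exact h2
      | inv x hx ihx => rw [inv_pow]; exact inv_mem ihx

/-- Frattini-type argument: in a nilpotent group, H ⊔ γ₂ = ⊤ implies H = ⊤. -/
private lemma frattini_arg {G : Type*} [Group G] [Group.IsNilpotent G] (H : Subgroup G)
    (hsup : H ⊔ (⊤ : Subgroup G).lowerCentralSeries 1 = ⊤) : H = ⊤ := by
  have claim : ∀ i, H ⊔ (⊤ : Subgroup G).lowerCentralSeries (1+i) = ⊤ := by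
    intro i
    induction i with
    | zero => exact hsup
    | succ i ih =>
      set j := 1 + i with hj
      have step : (⊤ : Subgroup G).lowerCentralSeries 1 ≤ H ⊔ (⊤ : Subgroup G).lowerCentralSeries (j+1) := by
        rw [hL1top, Subgroup.commutator_def, Subgroup.closure_le]
        rintro g ⟨x, -, y, -, rfl⟩
        have hx : x ∈ (H : Set G) * ((⊤ : Subgroup G).lowerCentralSeries j : Set G) := by
          rw [← Subgroup.mul_normal H ((⊤ : Subgroup G).lowerCentralSeries j), ih]; trivial
        have hy : y ∈ (H : Set G) * ((⊤ : Subgroup G).lowerCentralSeries j : Set G) := by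
          rw [← Subgroup.mul_normal H ((⊤ : Subgroup G).lowerCentralSeries j), ih]; trivial
        obtain ⟨h₁, hh₁, z₁, hz₁, rfl⟩ := hx
        obtain ⟨h₂, hh₂, z₂, hz₂, rfl⟩ := hy
        set π := QuotientGroup.mk' ((⊤ : Subgroup G).lowerCentralSeries (j+1)) with hπdef
        have c2 : π ⁅h₁ * z₁, z₂⁆ = 1 := by
          rw [map_commutatorElement]
          exact commutatorElement_eq_one_iff_commute.mpr (central_lcs hz₂ (h₁ * z₁)).symm
        have c1 : π ⁅z₁, h₂⁆ = 1 := by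
          rw [map_commutatorElement]
          exact commutatorElement_eq_one_iff_commute.mpr (central_lcs hz₁ h₂)
        have hA : π (h₂ * ⁅h₁ * z₁, z₂⁆ * h₂⁻¹) = 1 := by
          rw [map_mul, map_mul, c2, map_inv, mul_one, mul_inv_cancel]
        have hB : π (h₁ * ⁅z₁, h₂⁆ * h₁⁻¹) = 1 := by
          rw [map_mul, map_mul, c1, map_inv, mul_one, mul_inv_cancel]
        have e2 : π ⁅h₁ * z₁, h₂ * z₂⁆ = π ⁅h₁, h₂⁆ := by
          calc π ⁅h₁*z₁, h₂*z₂⁆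
              = π ⁅h₁*z₁, h₂⁆ * π (h₂ * ⁅h₁*z₁, z₂⁆ * h₂⁻¹) := by rw [comm2, map_mul]
            _ = π ⁅h₁*z₁, h₂⁆ := by rw [hA, mul_one]
            _ = π (h₁ * ⁅z₁,h₂⁆ * h₁⁻¹) * π ⁅h₁,h₂⁆ := by rw [comm1, map_mul]
            _ = π ⁅h₁,h₂⁆ := by rw [hB, one_mul]
        have hmem : ⁅h₁,h₂⁆⁻¹ * ⁅h₁ * z₁, h₂ * z₂⁆ ∈ (⊤ : Subgroup G).lowerCentralSeries (j+1) := by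
          rw [← QuotientGroup.eq_one_iff, ← QuotientGroup.mk'_apply, ← hπdef, map_mul, map_inv,
            e2, inv_mul_cancel]
        have hsplit : ⁅h₁ * z₁, h₂ * z₂⁆ = ⁅h₁,h₂⁆ * (⁅h₁,h₂⁆⁻¹ * ⁅h₁ * z₁, h₂ * z₂⁆) := by
          group
        rw [hsplit]
        have hcH : ⁅h₁, h₂⁆ ∈ H := by
          rw [commutatorElement_def]
          exact H.mul_mem (H.mul_mem (H.mul_mem hh₁ hh₂) (H.inv_mem hh₁)) (H.inv_mem hh₂)
        exact mul_mem (Subgroup.mem_sup_left hcH) (Subgroup.mem_sup_right hmem)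
      have hidx : 1 + (i+1) = j + 1 := by omega
      rw [hidx, eq_top_iff]
      nth_rw 1 [← ih]
      exact sup_le le_sup_left
        (le_trans (Subgroup.lowerCentralSeries_antitone ⊤ (show 1 ≤ j by omega)) step)
  obtain ⟨n, hn⟩ := (Subgroup.nilpotent_iff_lowerCentralSeries (G := G)).mp inferInstance
  have hbot : (⊤ : Subgroup G).lowerCentralSeries (1+n) = ⊥ := by
    have h := Subgroup.lowerCentralSeries_antitone (G := G) ⊤ (Nat.le_add_left n 1)
    rw [hn] at h
    exact le_bot_iff.mp h
  have hfin := claim n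
  rw [hbot, sup_bot_eq] at hfin
  exact hfin

private lemma det_trick1 {A : Type*} [CommGroup A] (u v : A) (α β γ δ : ℤ) :
    ((u^α * v^β)^δ) * ((u^γ * v^δ)^(-β)) = u^(α*δ - β*γ) := by
  rw [mul_zpow, mul_zpow, ← zpow_mul, ← zpow_mul, ← zpow_mul, ← zpow_mul,
    mul_mul_mul_comm, ← zpow_add, ← zpow_add,
    show β*δ + δ*(-β) = 0 by ring, zpow_zero, mul_one,
    show α*δ + γ*(-β) = α*δ - β*γ by ring]

private lemma det_trick2 {A : Type*} [CommGroup A] (u v : A) (α β γ δ : ℤ) :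
    ((u^α * v^β)^(-γ)) * ((u^γ * v^δ)^α) = v^(α*δ - β*γ) := by
  rw [mul_zpow, mul_zpow, ← zpow_mul, ← zpow_mul, ← zpow_mul, ← zpow_mul,
    mul_mul_mul_comm, ← zpow_add, ← zpow_add,
    show α*(-γ) + γ*α = 0 by ring, zpow_zero, one_mul,
    show β*(-γ) + δ*α = α*δ - β*γ by ring]

theorem stmt_15 {G : Type*} [Group G] [Group.IsNilpotent G]
    (htf : ∀ g : G, g ≠ 1 → ¬IsOfFinOrder g)
    (a b : G) (hgen : Subgroup.closure {a, b} = ⊤)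
    (H : Subgroup G) (hnormal : H.Normal) (hproper : H ≠ ⊤)
    (hfi : H.FiniteIndex) (hiso : Nonempty (H ≃* G)) :
    ∀ x y : G, x * y = y * x := by
  classical
  by_cases hc : ∃ k : ℕ, 0 < k ∧ ⁅a, b⁆ ^ k ∈ (⊤ : Subgroup G).lowerCentralSeries 2
  · -- Torsion case: γ₂/γ₃ is torsion, hence G is abelian.
    obtain ⟨k, hk, hck⟩ := hc
    set π := QuotientGroup.mk' ((⊤ : Subgroup G).lowerCentralSeries 2) with hπdef
    have h1 : ∀ g ∈ (⊤ : Subgroup G).lowerCentralSeries 1, g ^ k ∈ (⊤ : Subgroup G).lowerCentralSeries 2 := by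
      intro g hg
      have hg2 : g ∈ (Subgroup.zpowers ⁅a,b⁆ : Set G) * ((⊤ : Subgroup G).lowerCentralSeries 2 : Set G) := by
        rw [← Subgroup.mul_normal]
        exact L1_le_zpowers_sup a b hgen hg
      obtain ⟨x, hx, w, hw, rfl⟩ := hg2
      obtain ⟨j, rfl⟩ := Subgroup.mem_zpowers_iff.mp hx
      rw [← QuotientGroup.eq_one_iff ((⁅a,b⁆ ^ j * w) ^ k), ← QuotientGroup.mk'_apply, ← hπdef]
      have hπw : π w = 1 := by
        rw [hπdef, QuotientGroup.mk'_apply, QuotientGroup.eq_one_iff]; exact hw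
      have hπck : π (⁅a,b⁆ ^ k) = 1 := by
        rw [hπdef, QuotientGroup.mk'_apply, QuotientGroup.eq_one_iff]; exact hck
      have hcomm : Commute (π (⁅a,b⁆ ^ j)) (π w) := by rw [hπw]; exact Commute.one_right _
      rw [map_pow, map_mul, hcomm.mul_pow, hπw, one_pow, mul_one, map_zpow, ← zpow_natCast,
        ← zpow_mul, mul_comm j (k:ℤ), zpow_mul, zpow_natCast, ← map_pow, hπck, one_zpow]
    have hiter : ∀ m : ℕ, ∀ g ∈ (⊤ : Subgroup G).lowerCentralSeries 1,
        g ^ (k ^ m) ∈ (⊤ : Subgroup G).lowerCentralSeries (1 + m) := by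
      intro m
      induction m with
      | zero => intro g hg; simpa using hg
      | succ m ihm =>
        intro g hg
        have h2 := lcs_pow_step k h1 (1+m) (by omega) _ (ihm g hg)
        rw [← pow_mul, ← pow_succ] at h2
        have hidx : 1 + m + 1 = 1 + (m+1) := by omega
        rw [hidx] at h2
        exact h2
    obtain ⟨n, hn⟩ := (Subgroup.nilpotent_iff_lowerCentralSeries (G := G)).mp inferInstance
    have hbot : (⊤ : Subgroup G).lowerCentralSeries (1+n) = ⊥ := by
      have h := Subgroup.lowerCentralSeries_antitone (G := G) ⊤ (Nat.le_add_left n 1)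
      rw [hn] at h
      exact le_bot_iff.mp h
    intro x y
    have hmem := hiter n ⁅x,y⁆ (commElt_mem_L1 x y)
    rw [hbot, Subgroup.mem_bot] at hmem
    have hone : ⁅x, y⁆ = 1 := by
      by_contra hne
      exact htf _ hne (isOfFinOrder_iff_pow_eq_one.mpr ⟨k ^ n, pow_pos hk n, hmem⟩)
    exact commutatorElement_eq_one_iff_mul_comm.mp hone
  · -- Main case: γ₂/γ₃ infinite cyclic.
    exfalso
    push_neg at hc
    haveI : H.Normal := hnormal
    set π := QuotientGroup.mk' ((⊤ : Subgroup G).lowerCentralSeries 2) with hπdef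
    set c : G := ⁅a, b⁆ with hcdef
    set d := π c with hddef
    -- `d` has infinite order
    have hd : ∀ j : ℤ, d ^ j = 1 → j = 0 := by
      have base : ∀ j : ℤ, 0 < j → d ^ j ≠ 1 := by
        intro j hj hone
        refine hc j.toNat (by omega) ?_
        have hjeq : ((j.toNat : ℕ) : ℤ) = j := by omega
        rw [← QuotientGroup.eq_one_iff (c ^ j.toNat), ← QuotientGroup.mk'_apply, ← hπdef,
          map_pow, ← hddef, ← zpow_natCast, hjeq, hone]
      intro j hj
      rcases lt_trichotomy j 0 with h | h | h
      · exfalso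
        refine base (-j) (by omega) ?_
        rw [zpow_neg, hj, inv_one]
      · exact h
      · exact absurd hj (base j h)
    have hπ1 : ∀ {w : G}, w ∈ (⊤ : Subgroup G).lowerCentralSeries 2 → π w = 1 := by
      intro w hw
      rw [hπdef, QuotientGroup.mk'_apply, QuotientGroup.eq_one_iff]
      exact hw
    -- existence of the pairing
    have hκex : ∀ x y : G, ∃ j : ℤ, π ⁅x,y⁆ = d ^ j := by
      intro x y
      have h1 : ⁅x,y⁆ ∈ (Subgroup.zpowers c : Set G) * ((⊤ : Subgroup G).lowerCentralSeries 2 : Set G) := by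
        rw [← Subgroup.mul_normal]
        exact L1_le_zpowers_sup a b hgen (commElt_mem_L1 x y)
      obtain ⟨u, hu, w, hw, heq⟩ := h1
      obtain ⟨j, rfl⟩ := Subgroup.mem_zpowers_iff.mp hu
      exact ⟨j, by rw [← heq, map_mul, map_zpow, hπ1 hw, mul_one, hddef]⟩
    let κ : G → G → ℤ := fun x y => Classical.choose (hκex x y)
    have κspec : ∀ x y : G, π ⁅x,y⁆ = d ^ κ x y := fun x y => Classical.choose_spec (hκex x y)
    have κuniq : ∀ {x y : G} {j : ℤ}, π ⁅x,y⁆ = d ^ j → κ x y = j := by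
      intro x y j hj
      have h := κspec x y
      rw [hj] at h
      have h2 : d ^ (κ x y - j) = 1 := by rw [zpow_sub, ← h, mul_inv_cancel]
      have := hd _ h2
      omega
    -- bilinearity of the pairing
    have κ_mul_left : ∀ x y z : G, κ (x*y) z = κ x z + κ y z := by
      intro x y z
      apply κuniq
      rw [comm1, map_mul, conj_L1 (commElt_mem_L1 y z) x, κspec, κspec, ← zpow_add, add_comm]
    have κ_mul_right : ∀ x y z : G, κ x (y*z) = κ x y + κ x z := by
      intro x y z
      apply κuniq
      rw [comm2, map_mul, conj_L1 (commElt_mem_L1 x z) y, κspec, κspec, ← zpow_add]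
    have κ_self : ∀ x : G, κ x x = 0 :=
      fun x => κuniq (by rw [commutatorElement_self, map_one, zpow_zero])
    have κ_one_left : ∀ y : G, κ 1 y = 0 :=
      fun y => κuniq (by rw [show ⁅(1:G), y⁆ = 1 by group, map_one, zpow_zero])
    have κ_one_right : ∀ x : G, κ x 1 = 0 :=
      fun x => κuniq (by rw [show ⁅x, (1:G)⁆ = 1 by group, map_one, zpow_zero])
    have κ_inv_left : ∀ x y : G, κ x⁻¹ y = - κ x y := by
      intro x y
      have h := κ_mul_left x⁻¹ x y
      rw [inv_mul_cancel, κ_one_left] at h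
      omega
    have κ_inv_right : ∀ x y : G, κ x y⁻¹ = - κ x y := by
      intro x y
      have h := κ_mul_right x y⁻¹ y
      rw [inv_mul_cancel, κ_one_right] at h
      omega
    have κ_pow_left : ∀ (m : ℕ) (x y : G), κ (x^m) y = m * κ x y := by
      intro m x y
      induction m with
      | zero => rw [pow_zero, κ_one_left]; simp
      | succ m ihm => rw [pow_succ, κ_mul_left, ihm]; push_cast; ring
    have κ_pow_right : ∀ (m : ℕ) (x y : G), κ x (y^m) = m * κ x y := by
      intro m x y
      induction m with
      | zero => rw [pow_zero, κ_one_right]; simp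
      | succ m ihm => rw [pow_succ, κ_mul_right, ihm]; push_cast; ring
    have κ_zpow_left : ∀ (m : ℤ) (x y : G), κ (x^m) y = m * κ x y := by
      intro m x y
      induction m using Int.induction_on with
      | zero => rw [zpow_zero, κ_one_left]; ring
      | succ n ih => rw [zpow_add_one, κ_mul_left, ih]; ring
      | pred n ih => rw [zpow_sub_one, κ_mul_left, ih, κ_inv_left]; ring
    have κ_zpow_right : ∀ (m : ℤ) (x y : G), κ x (y^m) = m * κ x y := by
      intro m x y
      induction m using Int.induction_on with
      | zero => rw [zpow_zero, κ_one_right]; ring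
      | succ n ih => rw [zpow_add_one, κ_mul_right, ih]; ring
      | pred n ih => rw [zpow_sub_one, κ_mul_right, ih, κ_inv_right]; ring
    have κ_skew : ∀ x y : G, κ y x = - κ x y := by
      intro x y
      have h := κ_self (x*y)
      rw [κ_mul_left, κ_mul_right, κ_mul_right, κ_self, κ_self] at h
      omega
    have κ_ab : κ a b = 1 := κuniq (by rw [zpow_one, ← hcdef, ← hddef])
    have κ_L1_left : ∀ {x : G} (y : G), x ∈ (⊤ : Subgroup G).lowerCentralSeries 1 → κ x y = 0 := by
      intro x y hx
      exact κuniq (by rw [zpow_zero]; exact hπ1 (commElt_mem_lcs_succ hx y))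
    have κ_L1_right : ∀ (x : G) {y : G}, y ∈ (⊤ : Subgroup G).lowerCentralSeries 1 → κ x y = 0 := by
      intro x y hy
      have := κ_L1_left (x := y) x hy
      have h2 := κ_skew y x
      omega
    -- decomposition of arbitrary elements via the abelianization
    have hker : ∀ w : G, Abelianization.of w = 1 ↔ w ∈ (⊤ : Subgroup G).lowerCentralSeries 1 := by
      intro w
      rw [Subgroup.top_lowerCentralSeries_one]
      exact QuotientGroup.eq_one_iff w
    have hdec : ∀ z : G, ∃ (α β : ℤ) (w : G),
        w ∈ (⊤ : Subgroup G).lowerCentralSeries 1 ∧ z = a ^ α * b ^ β * w := by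
      intro z
      have hz : Abelianization.of z ∈
          Subgroup.closure ({Abelianization.of a, Abelianization.of b} :
            Set (Abelianization G)) := by
        have h1 : Abelianization.of z ∈ Subgroup.map Abelianization.of
            (Subgroup.closure ({a, b} : Set G)) := by
          rw [hgen]
          exact ⟨z, trivial, rfl⟩
        rw [MonoidHom.map_closure, Set.image_pair] at h1
        exact h1
      obtain ⟨α, β, hab⟩ := Subgroup.mem_closure_pair.mp hz
      refine ⟨α, β, (a ^ α * b ^ β)⁻¹ * z, ?_, by group⟩
      rw [← hker]
      rw [map_mul, map_inv, map_mul, map_zpow, map_zpow, hab]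
      group
    -- radical of the pairing is γ₂
    have hrad : ∀ z : G, κ z a = 0 → κ z b = 0 → z ∈ (⊤ : Subgroup G).lowerCentralSeries 1 := by
      intro z h1 h2
      obtain ⟨α, β, w, hw, rfl⟩ := hdec z
      rw [κ_mul_left, κ_mul_left, κ_zpow_left, κ_zpow_left, κ_self, κ_L1_left _ hw,
        κ_skew a b, κ_ab] at h1
      rw [κ_mul_left, κ_mul_left, κ_zpow_left, κ_zpow_left, κ_self, κ_L1_left _ hw,
        κ_ab] at h2
      have hα : α = 0 := by omega
      have hβ : β = 0 := by omega
      rw [hα, hβ]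
      simpa using hw
    -- the injective endomorphism ψ with range H
    obtain ⟨φ⟩ := hiso
    set ψ : G →* G := H.subtype.comp φ.symm.toMonoidHom with hψdef
    have hψH : ∀ x : G, ψ x ∈ H := fun x => (φ.symm x).2
    have hHψ : ∀ h : G, h ∈ H → ∃ x, ψ x = h := by
      intro h hh
      refine ⟨φ ⟨h, hh⟩, ?_⟩
      show ((φ.symm (φ ⟨h, hh⟩) : H) : G) = h
      rw [MulEquiv.symm_apply_apply]
    have hψL : ∀ (n : ℕ) {g : G}, g ∈ (⊤ : Subgroup G).lowerCentralSeries n → ψ g ∈ (⊤ : Subgroup G).lowerCentralSeries n :=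
      fun n g hg => Subgroup.lowerCentralSeries.map ψ n (Subgroup.mem_map_of_mem ψ hg)
    have hpowH : ∀ g : G, g ^ H.index ∈ H := fun g => H.pow_index_mem g
    have hn0 : H.index ≠ 0 := hfi.index_ne_zero
    set M := κ (ψ a) (ψ b) with hMdef
    have hψc : π (ψ c) = d ^ M := by
      rw [hcdef, map_commutatorElement]
      exact κspec (ψ a) (ψ b)
    -- ψ scales the pairing by M
    have KL1 : ∀ x y : G, κ (ψ x) (ψ y) = M * κ x y := by
      intro x y
      apply κuniq
      have hw' : π ((c ^ κ x y)⁻¹ * ⁅x, y⁆) = 1 := by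
        rw [map_mul, map_inv, map_zpow, ← hddef, κspec, inv_mul_cancel]
      have hxy : ⁅x, y⁆ = c ^ κ x y * ((c ^ κ x y)⁻¹ * ⁅x, y⁆) := by group
      have hwmem : (c ^ κ x y)⁻¹ * ⁅x, y⁆ ∈ (⊤ : Subgroup G).lowerCentralSeries 2 := by
        rw [← QuotientGroup.eq_one_iff ((c ^ κ x y)⁻¹ * ⁅x, y⁆), ← QuotientGroup.mk'_apply,
          ← hπdef]
        exact hw'
      rw [← map_commutatorElement, hxy, map_mul, map_mul, map_zpow, map_zpow,
        hπ1 (hψL 2 hwmem), mul_one, hψc, ← zpow_mul]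
    have hM0 : M ≠ 0 := by
      obtain ⟨x₀, hx₀⟩ := hHψ _ (hpowH a)
      obtain ⟨y₀, hy₀⟩ := hHψ _ (hpowH b)
      have h2 : κ (a ^ H.index) (b ^ H.index) = M * κ x₀ y₀ := by
        rw [← hx₀, ← hy₀, KL1]
      rw [κ_pow_left, κ_pow_right, κ_ab, mul_one] at h2
      intro hM
      rw [hM, zero_mul] at h2
      have : (H.index : ℤ) ≠ 0 := Int.natCast_ne_zero.mpr hn0
      exact this (by nlinarith [h2])
    -- elements of H ∩ γ₂ have pairing-coordinate divisible by M
    have hHdvd : ∀ w : G, w ∈ H → w ∈ (⊤ : Subgroup G).lowerCentralSeries 1 → ∃ j : ℤ, π w = d ^ (M * j) := by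
      intro w hwH hwL
      obtain ⟨x, rfl⟩ := hHψ w hwH
      have h1 : κ x a = 0 := by
        have ha' := KL1 x a
        rw [κ_L1_left (ψ a) hwL] at ha'
        exact (mul_eq_zero.mp ha'.symm).resolve_left hM0
      have h2 : κ x b = 0 := by
        have hb' := KL1 x b
        rw [κ_L1_left (ψ b) hwL] at hb'
        exact (mul_eq_zero.mp hb'.symm).resolve_left hM0
      have hx1 : x ∈ (⊤ : Subgroup G).lowerCentralSeries 1 := hrad x h1 h2
      have hx2 : x ∈ (Subgroup.zpowers c : Set G) * ((⊤ : Subgroup G).lowerCentralSeries 2 : Set G) := by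
        rw [← Subgroup.mul_normal]
        exact L1_le_zpowers_sup a b hgen hx1
      obtain ⟨u, hu, w₃, hw₃, heq⟩ := hx2
      obtain ⟨j, rfl⟩ := Subgroup.mem_zpowers_iff.mp hu
      refine ⟨j, ?_⟩
      rw [← heq, map_mul, map_mul, map_zpow, map_zpow, hπ1 (hψL 2 hw₃), mul_one, hψc,
        ← zpow_mul]
    -- normality: κ (ψ x) g is divisible by M
    have hnormκ : ∀ x g : G, ∃ j : ℤ, κ (ψ x) g = M * j := by
      intro x g
      have hmem : ⁅ψ x, g⁆ ∈ H := by
        have hre : ⁅ψ x, g⁆ = ψ x * (g * (ψ x)⁻¹ * g⁻¹) := by group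
        rw [hre]
        exact H.mul_mem (hψH x) (hnormal.conj_mem _ (H.inv_mem (hψH x)) g)
      obtain ⟨j, hj⟩ := hHdvd _ hmem (commElt_mem_L1 (ψ x) g)
      exact ⟨j, κuniq hj⟩
    -- coordinates of ψ a and ψ b
    obtain ⟨α, β, w₁, hw₁, hψa⟩ := hdec (ψ a)
    obtain ⟨γ, δ, w₂, hw₂, hψb⟩ := hdec (ψ b)
    have eα : κ (ψ a) b = α := by
      rw [hψa, κ_mul_left, κ_mul_left, κ_zpow_left, κ_zpow_left, κ_self, κ_ab,
        κ_L1_left _ hw₁]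
      ring
    have eβ : κ (ψ a) a = -β := by
      rw [hψa, κ_mul_left, κ_mul_left, κ_zpow_left, κ_zpow_left, κ_self, κ_skew a b, κ_ab,
        κ_L1_left _ hw₁]
      ring
    have eγ : κ (ψ b) b = γ := by
      rw [hψb, κ_mul_left, κ_mul_left, κ_zpow_left, κ_zpow_left, κ_self, κ_ab,
        κ_L1_left _ hw₂]
      ring
    have eδ : κ (ψ b) a = -δ := by
      rw [hψb, κ_mul_left, κ_mul_left, κ_zpow_left, κ_zpow_left, κ_self, κ_skew a b, κ_ab,
        κ_L1_left _ hw₂]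
      ring
    obtain ⟨jα, hjα⟩ := hnormκ a b
    obtain ⟨jβ, hjβ⟩ := hnormκ a a
    obtain ⟨jγ, hjγ⟩ := hnormκ b b
    obtain ⟨jδ, hjδ⟩ := hnormκ b a
    have hα : α = M * jα := by rw [eα] at hjα; exact hjα
    have hβ : β = - (M * jβ) := by rw [eβ] at hjβ; linarith
    have hγ : γ = M * jγ := by rw [eγ] at hjγ; exact hjγ
    have hδ : δ = - (M * jδ) := by rw [eδ] at hjδ; linarith
    -- M = αδ - βγ
    have hκaψb : κ a (ψ b) = δ := by
      rw [hψb, κ_mul_right, κ_mul_right, κ_zpow_right, κ_zpow_right, κ_self, κ_ab,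
        κ_L1_right _ hw₂]
      ring
    have hκbψb : κ b (ψ b) = -γ := by
      rw [hψb, κ_mul_right, κ_mul_right, κ_zpow_right, κ_zpow_right, κ_self, κ_skew a b, κ_ab,
        κ_L1_right _ hw₂]
      ring
    have hMeq : M = α * δ - β * γ := by
      rw [hMdef]
      conv_lhs => rw [hψa]
      rw [κ_mul_left, κ_mul_left, κ_zpow_left, κ_zpow_left, κ_L1_left _ hw₁, hκaψb, hκbψb]
      ring
    -- conclude M = ±1
    have hMM : M * 1 = M * (M * (jβ * jγ - jα * jδ)) := by
      rw [mul_one]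
      calc M = α * δ - β * γ := hMeq
        _ = (M * jα) * (-(M * jδ)) - (-(M * jβ)) * (M * jγ) := by rw [← hα, ← hβ, ← hγ, ← hδ]
        _ = M * (M * (jβ * jγ - jα * jδ)) := by ring
    have h1M : 1 = M * (jβ * jγ - jα * jδ) := mul_left_cancel₀ hM0 hMM
    have hMunit : M = 1 ∨ M = -1 := Int.isUnit_iff.mp (IsUnit.of_mul_eq_one (a := M) _ h1M.symm)
    -- abelianization endgame: H together with γ₂ generates G
    have hfa : Abelianization.of (ψ a)
        = (Abelianization.of a) ^ α * (Abelianization.of b) ^ β := by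
      rw [hψa, map_mul, map_mul, map_zpow, map_zpow, (hker w₁).mpr hw₁, mul_one]
    have hfb : Abelianization.of (ψ b)
        = (Abelianization.of a) ^ γ * (Abelianization.of b) ^ δ := by
      rw [hψb, map_mul, map_mul, map_zpow, map_zpow, (hker w₂).mpr hw₂, mul_one]
    set T := Subgroup.map (Abelianization.of (G := G)) H with hTdef
    have hTa : (Abelianization.of a) ^ (α * δ - β * γ) ∈ T := by
      rw [← det_trick1 (Abelianization.of a) (Abelianization.of b) α β γ δ, ← hfa, ← hfb]
      exact mul_mem (zpow_mem (Subgroup.mem_map_of_mem _ (hψH a)) _)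
        (zpow_mem (Subgroup.mem_map_of_mem _ (hψH b)) _)
    have hTb : (Abelianization.of b) ^ (α * δ - β * γ) ∈ T := by
      rw [← det_trick2 (Abelianization.of a) (Abelianization.of b) α β γ δ, ← hfa, ← hfb]
      exact mul_mem (zpow_mem (Subgroup.mem_map_of_mem _ (hψH a)) _)
        (zpow_mem (Subgroup.mem_map_of_mem _ (hψH b)) _)
    rw [← hMeq] at hTa hTb
    have hTa' : Abelianization.of a ∈ T := by
      rcases hMunit with h | h
      · rw [h, zpow_one] at hTa; exact hTa
      · rw [h, zpow_neg, zpow_one] at hTa; exact (inv_mem_iff).mp hTa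
    have hTb' : Abelianization.of b ∈ T := by
      rcases hMunit with h | h
      · rw [h, zpow_one] at hTb; exact hTb
      · rw [h, zpow_neg, zpow_one] at hTb; exact (inv_mem_iff).mp hTb
    have hsup : H ⊔ (⊤ : Subgroup G).lowerCentralSeries 1 = ⊤ := by
      refine le_antisymm le_top ?_
      intro g _
      obtain ⟨α', β', w, hw, rfl⟩ := hdec g
      have hg : Abelianization.of (a ^ α' * b ^ β' * w) ∈ T := by
        rw [map_mul, map_mul, map_zpow, map_zpow, (hker w).mpr hw, mul_one]
        exact mul_mem (zpow_mem hTa' _) (zpow_mem hTb' _)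
      obtain ⟨h, hh, hfh⟩ := hg
      have hmem2 : h⁻¹ * (a ^ α' * b ^ β' * w) ∈ (⊤ : Subgroup G).lowerCentralSeries 1 := by
        rw [← hker, map_mul, map_inv, hfh]
        group
      have hre : a ^ α' * b ^ β' * w = h * (h⁻¹ * (a ^ α' * b ^ β' * w)) := by group
      rw [hre]
      exact mul_mem (Subgroup.mem_sup_left hh) (Subgroup.mem_sup_right hmem2)
    exact hproper (frattini_arg H hsup)
end

section
/- Let G be a finitely generated torsion-free nilpotent group, H ≤ G of finite index, and f : H → G a monomorphism such that the induced map Z(H) → Z(G) has trivial f-core in the sense that no nontrivial subgroup of Z(H) normal in G is f-invariant. Then f itself is simple: no nontrivial subgroup K ≤ H normal in G satisfies f(K) ≤ K. -/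
open Subgroup
open scoped commutatorElement

section Stmt19Aux

variable {G : Type*} [Group G]

/-- The "relative isolator": elements of `A` that have a positive power in `S`.
A subgroup provided elements of `A` commute pairwise. -/
def stmt19RelIso (A S : Subgroup G) (hab : ∀ a ∈ A, ∀ b ∈ A, a * b = b * a) :
    Subgroup G where
  carrier := {x | x ∈ A ∧ ∃ n : ℕ, 0 < n ∧ x ^ n ∈ S}
  one_mem' := ⟨A.one_mem, 1, one_pos, by simpa using S.one_mem⟩
  mul_mem' := by
    rintro x y ⟨hxA, n, hn, hxn⟩ ⟨hyA, m, hm, hym⟩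
    refine ⟨A.mul_mem hxA hyA, n * m, Nat.mul_pos hn hm, ?_⟩
    have hc : Commute x y := hab x hxA y hyA
    rw [hc.mul_pow]
    exact S.mul_mem (by rw [pow_mul]; exact S.pow_mem hxn m)
      (by rw [mul_comm n m, pow_mul]; exact S.pow_mem hym n)
  inv_mem' := by
    rintro x ⟨hxA, n, hn, hxn⟩
    exact ⟨A.inv_mem hxA, n, hn, by rw [inv_pow]; exact S.inv_mem hxn⟩

/-- The subgroup generated by commutators of `G` with elements of `S`. -/
def stmt19TG (S : Subgroup G) : Subgroup G :=
  Subgroup.closure {x : G | ∃ g : G, ∃ c ∈ S, x = ⁅g, c⁆}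

/-- The subgroup generated by commutators of `H` with elements of `S`. -/
def stmt19TH (H S : Subgroup G) : Subgroup G :=
  Subgroup.closure {x : G | ∃ h ∈ H, ∃ c ∈ S, x = ⁅h, c⁆}

/-- The descending chain of isolated iterated commutator subgroups. -/
def stmt19C (A : Subgroup G) (hab : ∀ a ∈ A, ∀ b ∈ A, a * b = b * a) : ℕ → Subgroup G
  | 0 => A
  | (j + 1) => stmt19RelIso A (stmt19TG (stmt19C A hab j)) hab

theorem stmt19_core {G : Type*} [Group G] (htf : ∀ g : G, g ≠ 1 → ¬IsOfFinOrder g)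
    (n : ℕ) (hn : Subgroup.upperCentralSeries G n = ⊤)
    (H : Subgroup G) (hpow : ∀ g : G, ∃ m : ℕ, 0 < m ∧ g ^ m ∈ H)
    (f : ↥H →* G)
    (A : Subgroup G) (hAH : A ≤ H)
    (hAnorm : ∀ g : G, ∀ x ∈ A, g * x * g⁻¹ ∈ A)
    (hab : ∀ a ∈ A, ∀ b ∈ A, a * b = b * a)
    (hfA : ∀ (x : G) (hx : x ∈ A) (hxH : x ∈ H), f ⟨x, hxH⟩ ∈ A)
    (hfinv : ∀ (x : G) (hx : x ∈ A) (hxH : x ∈ H), f ⟨x, hxH⟩ ∈ A)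
    (hAbot : A ≠ ⊥) :
    ∃ N : Subgroup G, N ≠ ⊥ ∧ N ≤ A ∧ (∀ x ∈ N, ∀ g : G, g * x = x * g) ∧
      (∀ (x : G) (hx : x ∈ N) (hxH : x ∈ H), f ⟨x, hxH⟩ ∈ N) := by
  classical
  -- basic commutator facts relative to A
  have hcomm_mem : ∀ (g : G) {a : G}, a ∈ A → ⁅g, a⁆ ∈ A := by
    intro g a ha
    have h : ⁅g, a⁆ = (g * a * g⁻¹) * a⁻¹ := by group
    rw [h]
    exact A.mul_mem (hAnorm g a ha) (A.inv_mem ha)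
  have hcomm_mul : ∀ (g : G) {a b : G}, a ∈ A → b ∈ A → ⁅g, a * b⁆ = ⁅g, a⁆ * ⁅g, b⁆ := by
    intro g a b ha hb
    have h1 : ⁅g, a * b⁆ = ⁅g, a⁆ * (a * ⁅g, b⁆ * a⁻¹) := by group
    have h2 : a * ⁅g, b⁆ = ⁅g, b⁆ * a := hab a ha _ (hcomm_mem g hb)
    rw [h1, h2]
    group
  have hcomm_pow : ∀ (g : G) {a : G}, a ∈ A → ∀ m : ℕ, ⁅g, a ^ m⁆ = ⁅g, a⁆ ^ m := by
    intro g a ha m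
    induction m with
    | zero => simp
    | succ m ih =>
      rw [pow_succ, hcomm_mul g (A.pow_mem ha m) ha, ih, pow_succ]
  have hZstep : ∀ {i : ℕ} {x : G}, x ∈ Subgroup.upperCentralSeries G (i + 1) → ∀ g : G,
      ⁅g, x⁆ ∈ Subgroup.upperCentralSeries G i := by
    intro i x hx g
    have h1 : x * g * x⁻¹ * g⁻¹ ∈ Subgroup.upperCentralSeries G i :=
      Subgroup.mem_upperCentralSeries_succ_iff.mp hx g
    have h2 : ⁅g, x⁆ = (x * g * x⁻¹ * g⁻¹)⁻¹ := by group
    rw [h2]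
    exact (Subgroup.upperCentralSeries G i).inv_mem h1
  have hTG_le_A : ∀ S : Subgroup G, S ≤ A → stmt19TG S ≤ A := by
    intro S hSA
    refine (Subgroup.closure_le A).mpr ?_
    rintro x ⟨g, c, hc, rfl⟩
    exact hcomm_mem g (hSA hc)
  have hTH_le_A : ∀ S : Subgroup G, S ≤ A → stmt19TH H S ≤ A := by
    intro S hSA
    refine (Subgroup.closure_le A).mpr ?_
    rintro x ⟨h, _, c, hc, rfl⟩
    exact hcomm_mem h (hSA hc)
  have hle_relIso : ∀ S T : Subgroup G, S ≤ A → S ≤ T → S ≤ stmt19RelIso A T hab := by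
    intro S T hSA hST x hx
    exact ⟨hSA hx, 1, one_pos, by simpa using hST hx⟩
  -- the key lemma : commutators with G have powers in the H-commutator subgroup
  have key : ∀ S : Subgroup G, S ≤ A → (∀ g : G, ∀ x ∈ S, g * x * g⁻¹ ∈ S) →
      ∀ (i : ℕ) (c g : G), c ∈ S → c ∈ Subgroup.upperCentralSeries G i →
      ⁅g, c⁆ ∈ stmt19RelIso A (stmt19TH H S) hab := by
    intro S hSA hSnorm i
    induction i with
    | zero =>
      intro c g hcS hc0
      rw [Subgroup.upperCentralSeries_zero, Subgroup.mem_bot] at hc0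
      subst hc0
      simpa using (stmt19RelIso A (stmt19TH H S) hab).one_mem
    | succ i ih =>
      intro c g hcS hci
      obtain ⟨m, hm, hgm⟩ := hpow g
      have hcS_comm : ∀ k : ℕ, ⁅g ^ k, c⁆ ∈ S := by
        intro k
        have h : ⁅g ^ k, c⁆ = (g ^ k * c * (g ^ k)⁻¹) * c⁻¹ := by group
        rw [h]
        exact S.mul_mem (hSnorm (g ^ k) c hcS) (S.inv_mem hcS)
      have claim : ∀ k : ℕ, ∃ w ∈ stmt19RelIso A (stmt19TH H S) hab,
          ⁅g ^ k, c⁆ = ⁅g, c⁆ ^ k * w := by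
        intro k
        induction k with
        | zero =>
          exact ⟨1, (stmt19RelIso A (stmt19TH H S) hab).one_mem, by simp⟩
        | succ k ihk =>
          obtain ⟨w, hw, hwe⟩ := ihk
          have hdS : ⁅g ^ k, c⁆ ∈ S := hcS_comm k
          have hdA : ⁅g ^ k, c⁆ ∈ A := hSA hdS
          have hdZ : ⁅g ^ k, c⁆ ∈ Subgroup.upperCentralSeries G i := hZstep hci (g ^ k)
          have hv : ⁅g, ⁅g ^ k, c⁆⁆ ∈ stmt19RelIso A (stmt19TH H S) hab :=
            ih ⁅g ^ k, c⁆ g hdS hdZ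
          refine ⟨⁅g, ⁅g ^ k, c⁆⁆ * w,
            (stmt19RelIso A (stmt19TH H S) hab).mul_mem hv hw, ?_⟩
          have hidentity : ⁅g ^ (k + 1), c⁆ = ⁅g, ⁅g ^ k, c⁆ * c⁆ * ⁅g ^ k, c⁆ := by
            group
          rw [hidentity, hcomm_mul g hdA (hSA hcS)]
          have hcm : Commute ⁅g, ⁅g ^ k, c⁆⁆ ⁅g, c⁆ :=
            hab _ (hcomm_mem g hdA) _ (hcomm_mem g (hSA hcS))
          calc ⁅g, ⁅g ^ k, c⁆⁆ * ⁅g, c⁆ * ⁅g ^ k, c⁆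
              = ⁅g, ⁅g ^ k, c⁆⁆ * ⁅g, c⁆ * (⁅g, c⁆ ^ k * w) :=
                congrArg (fun z => ⁅g, ⁅g ^ k, c⁆⁆ * ⁅g, c⁆ * z) hwe
            _ = ⁅g, ⁅g ^ k, c⁆⁆ * ⁅g, c⁆ ^ (k + 1) * w := by
                rw [pow_succ']
                simp only [mul_assoc]
            _ = ⁅g, c⁆ ^ (k + 1) * ⁅g, ⁅g ^ k, c⁆⁆ * w := by
                rw [(hcm.pow_right (k + 1)).eq]
            _ = ⁅g, c⁆ ^ (k + 1) * (⁅g, ⁅g ^ k, c⁆⁆ * w) := by rw [mul_assoc]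
      obtain ⟨w, hw, hwe⟩ := claim m
      have hgen : ⁅g ^ m, c⁆ ∈ stmt19RelIso A (stmt19TH H S) hab :=
        hle_relIso _ _ (hTH_le_A S hSA) le_rfl
          (Subgroup.subset_closure ⟨g ^ m, hgm, c, hcS, rfl⟩)
      have hum : ⁅g, c⁆ ^ m ∈ stmt19RelIso A (stmt19TH H S) hab := by
        have h : ⁅g, c⁆ ^ m = ⁅g ^ m, c⁆ * w⁻¹ := by rw [hwe, mul_inv_cancel_right]
        rw [h]
        exact (stmt19RelIso A (stmt19TH H S) hab).mul_mem hgen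
          ((stmt19RelIso A (stmt19TH H S) hab).inv_mem hw)
      obtain ⟨-, m₂, hm₂, hpow2⟩ := hum
      exact ⟨hcomm_mem g (hSA hcS), m * m₂, Nat.mul_pos hm hm₂,
        by rw [pow_mul]; exact hpow2⟩
  -- invariants of the chain
  have hCinv : ∀ j : ℕ, (stmt19C A hab j ≤ A) ∧
      (∀ g : G, ∀ x ∈ stmt19C A hab j, g * x * g⁻¹ ∈ stmt19C A hab j) ∧
      (∀ (x : G) (hx : x ∈ stmt19C A hab j) (hxH : x ∈ H),
        f ⟨x, hxH⟩ ∈ stmt19C A hab j) := by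
    intro j
    induction j with
    | zero => exact ⟨le_rfl, fun g x hx => hAnorm g x hx, fun x hx hxH => hfA x hx hxH⟩
    | succ j ih =>
      obtain ⟨ihA, ihnorm, ihf⟩ := ih
      have hTGnorm : ∀ g : G, ∀ y ∈ stmt19TG (stmt19C A hab j),
          g * y * g⁻¹ ∈ stmt19TG (stmt19C A hab j) := by
        intro g y hy
        refine Subgroup.closure_induction ?_ ?_ ?_ ?_ hy
        · rintro x ⟨g', c, hc, rfl⟩
          have h : g * ⁅g', c⁆ * g⁻¹ = ⁅g * g' * g⁻¹, g * c * g⁻¹⁆ := by group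
          rw [h]
          exact Subgroup.subset_closure ⟨g * g' * g⁻¹, g * c * g⁻¹, ihnorm g c hc, rfl⟩
        · simpa using (stmt19TG (stmt19C A hab j)).one_mem
        · intro x y _ _ px py
          have h : g * (x * y) * g⁻¹ = (g * x * g⁻¹) * (g * y * g⁻¹) := by group
          rw [h]
          exact (stmt19TG (stmt19C A hab j)).mul_mem px py
        · intro x _ px
          have h : g * x⁻¹ * g⁻¹ = (g * x * g⁻¹)⁻¹ := by group
          rw [h]
          exact (stmt19TG (stmt19C A hab j)).inv_mem px
      refine ⟨fun x hx => hx.1, ?_, ?_⟩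
      · intro g x hx
        obtain ⟨hxA, m, hm, hxm⟩ := hx
        refine ⟨hAnorm g x hxA, m, hm, ?_⟩
        rw [conj_pow]
        exact hTGnorm g _ hxm
      · intro x hx hxH
        obtain ⟨hxA, m, hm, hxm⟩ := hx
        have h1 : stmt19TG (stmt19C A hab j) ≤
            stmt19RelIso A (stmt19TH H (stmt19C A hab j)) hab := by
          refine (Subgroup.closure_le _).mpr ?_
          rintro y ⟨g, c, hc, rfl⟩
          exact key _ ihA ihnorm n c g hc (by rw [hn]; trivial)
        obtain ⟨-, m₂, hm₂, hxm₂⟩ := h1 hxm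
        rw [← pow_mul] at hxm₂
        have h2 : ∀ y ∈ stmt19TH H (stmt19C A hab j),
            y ∈ H ∧ ∀ (hyH : y ∈ H), f ⟨y, hyH⟩ ∈ stmt19TG (stmt19C A hab j) := by
          intro y hy
          refine Subgroup.closure_induction ?_ ?_ ?_ ?_ hy
          · rintro z ⟨h, hh, c, hc, rfl⟩
            have hcH : c ∈ H := hAH (ihA hc)
            have hzH : ⁅h, c⁆ ∈ H := by
              rw [commutatorElement_def]
              exact H.mul_mem (H.mul_mem (H.mul_mem hh hcH) (H.inv_mem hh)) (H.inv_mem hcH)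
            refine ⟨hzH, fun hyH' => ?_⟩
            have he : (⟨⁅h, c⁆, hyH'⟩ : ↥H) = ⁅(⟨h, hh⟩ : ↥H), (⟨c, hcH⟩ : ↥H)⁆ := by
              ext
              simp [commutatorElement_def]
            rw [he, map_commutatorElement]
            exact Subgroup.subset_closure ⟨f ⟨h, hh⟩, f ⟨c, hcH⟩, ihf c hc hcH, rfl⟩
          · refine ⟨H.one_mem, fun h1 => ?_⟩
            have : (⟨(1 : G), h1⟩ : ↥H) = 1 := rfl
            rw [this, map_one]
            exact (stmt19TG (stmt19C A hab j)).one_mem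
          · rintro x y hx hy ⟨hxH', px⟩ ⟨hyH', py⟩
            refine ⟨H.mul_mem hxH' hyH', fun hxy => ?_⟩
            have : (⟨x * y, hxy⟩ : ↥H) = ⟨x, hxH'⟩ * ⟨y, hyH'⟩ := rfl
            rw [this, map_mul]
            exact (stmt19TG (stmt19C A hab j)).mul_mem (px hxH') (py hyH')
          · rintro x hx ⟨hxH', px⟩
            refine ⟨H.inv_mem hxH', fun hxi => ?_⟩
            have : (⟨x⁻¹, hxi⟩ : ↥H) = (⟨x, hxH'⟩ : ↥H)⁻¹ := rfl
            rw [this, map_inv]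
            exact (stmt19TG (stmt19C A hab j)).inv_mem (px hxH')
        obtain ⟨-, hfx⟩ := h2 _ hxm₂
        have hxMH : x ^ (m * m₂) ∈ H := pow_mem hxH _
        refine ⟨hfA x hxA hxH, m * m₂, Nat.mul_pos hm hm₂, ?_⟩
        have hc2 : (⟨x, hxH⟩ : ↥H) ^ (m * m₂) = ⟨x ^ (m * m₂), hxMH⟩ := by
          ext
          simp
        rw [← map_pow, hc2]
        exact hfx hxMH
  -- termination of the chain
  have hterm : ∀ j : ℕ, j ≤ n → ∀ x ∈ stmt19C A hab j,
      ∃ m : ℕ, 0 < m ∧ x ^ m ∈ Subgroup.upperCentralSeries G (n - j) := by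
    intro j
    induction j with
    | zero =>
      intro _ x _
      exact ⟨1, one_pos, by rw [pow_one, Nat.sub_zero, hn]; trivial⟩
    | succ j ih =>
      intro hjn x hx
      obtain ⟨hxA, m, hm, hxm⟩ := hx
      have hsub : stmt19TG (stmt19C A hab j) ≤
          stmt19RelIso A (Subgroup.upperCentralSeries G (n - (j + 1))) hab := by
        refine (Subgroup.closure_le _).mpr ?_
        rintro y ⟨g, c, hc, rfl⟩
        obtain ⟨m', hm', hcm'⟩ := ih (by omega) c hc
        refine ⟨hcomm_mem g ((hCinv j).1 hc), m', hm', ?_⟩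
        rw [← hcomm_pow g ((hCinv j).1 hc) m']
        have heq : n - j = (n - (j + 1)) + 1 := by omega
        rw [heq] at hcm'
        exact hZstep hcm' g
      obtain ⟨-, m₂, hm₂, h2⟩ := hsub hxm
      exact ⟨m * m₂, Nat.mul_pos hm hm₂, by rw [pow_mul]; exact h2⟩
  have hCn : stmt19C A hab n = ⊥ := by
    rw [eq_bot_iff]
    intro x hx
    obtain ⟨m, hm, hxm⟩ := hterm n le_rfl x hx
    rw [Nat.sub_self, Subgroup.upperCentralSeries_zero, Subgroup.mem_bot] at hxm
    rw [Subgroup.mem_bot]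
    by_contra hx1
    exact htf x hx1 (isOfFinOrder_iff_pow_eq_one.mpr ⟨m, hm, hxm⟩)
  -- find the last nontrivial term
  have hex : ∃ j, stmt19C A hab j = ⊥ := ⟨n, hCn⟩
  have hs0 : Nat.find hex ≠ 0 := by
    intro h
    have := Nat.find_spec hex
    rw [h] at this
    exact hAbot this
  obtain ⟨t, ht⟩ := Nat.exists_eq_succ_of_ne_zero hs0
  have hNbot : stmt19C A hab t ≠ ⊥ := Nat.find_min hex (by omega)
  have hCt1 : stmt19C A hab (t + 1) = ⊥ := by
    have h := Nat.find_spec hex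
    rw [show t + 1 = Nat.find hex from by omega]
    exact h
  refine ⟨stmt19C A hab t, hNbot, (hCinv t).1, ?_, fun x hx hxH => (hCinv t).2.2 x hx hxH⟩
  intro x hx g
  have h1 : ⁅g, x⁆ ∈ stmt19TG (stmt19C A hab t) := Subgroup.subset_closure ⟨g, x, hx, rfl⟩
  have h2 : ⁅g, x⁆ ∈ stmt19C A hab (t + 1) :=
    hle_relIso _ _ (hTG_le_A _ (hCinv t).1) le_rfl h1
  rw [hCt1, Subgroup.mem_bot] at h2
  exact (commutatorElement_eq_one_iff_mul_comm.mp h2)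

end Stmt19Aux

theorem stmt_19 {G : Type*} [Group G] [Group.IsNilpotent G] (hfg : Group.FG G)
    (htf : ∀ g : G, g ≠ 1 → ¬IsOfFinOrder g)
    (H : Subgroup G) (hH : H.FiniteIndex)
    (f : H →* G) (hf : Function.Injective f)
    (hcenter : ∀ N : Subgroup G, (hNH : N ≤ H) →
      N ≤ Subgroup.map H.subtype (Subgroup.center H) → N.Normal →
      (∀ x : G, (hx : x ∈ N) → f ⟨x, hNH hx⟩ ∈ N) → N = ⊥) :
    ∀ K : Subgroup G, (hKH : K ≤ H) → K.Normal →
      (∀ x : G, (hx : x ∈ K) → f ⟨x, hKH hx⟩ ∈ K) → K = ⊥ := by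
  intro K hKH hKnorm hKf
  classical
  by_contra hK0
  -- the nilpotency class of K
  haveI : Nontrivial ↥K := (Subgroup.nontrivial_iff_ne_bot K).mpr hK0
  have hcne : Group.nilpotencyClass ↥K ≠ 0 := by
    intro h
    haveI := nilpotencyClass_zero_iff_subsingleton.mp h
    exact false_of_nontrivial_of_subsingleton ↥K
  obtain ⟨t, ht⟩ := Nat.exists_eq_succ_of_ne_zero hcne
  -- the last nontrivial term of the lower central series of K
  have hlcs_bot : Subgroup.lowerCentralSeries (⊤ : Subgroup ↥K) (t + 1) = ⊥ := by
    rw [show t + 1 = Group.nilpotencyClass ↥K from by omega]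
    exact Subgroup.lowerCentralSeries_nilpotencyClass
  have hlcs_ne : Subgroup.lowerCentralSeries (⊤ : Subgroup ↥K) t ≠ ⊥ := by
    have hfind := Subgroup.lowerCentralSeries_length_eq_nilpotencyClass (G := ↥K)
    exact Nat.find_min (Subgroup.nilpotent_iff_lowerCentralSeries.mp inferInstance)
      (by rw [hfind]; omega)
  set A : Subgroup G := Subgroup.map K.subtype (Subgroup.lowerCentralSeries (⊤ : Subgroup ↥K) t) with hA
  have hAK : A ≤ K := Subgroup.map_subtype_le _
  have hAH : A ≤ H := hAK.trans hKH
  have hAbot : A ≠ ⊥ := by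
    intro h
    apply hlcs_ne
    rw [hA] at h
    rwa [Subgroup.map_eq_bot_iff_of_injective _ (Subgroup.subtype_injective K)] at h
  -- A is abelian
  have hab : ∀ a ∈ A, ∀ b ∈ A, a * b = b * a := by
    rintro a ⟨a', ha', rfl⟩ b ⟨b', hb', rfl⟩
    have h1 : ⁅a', b'⁆ ∈ Subgroup.lowerCentralSeries (⊤ : Subgroup ↥K) (t + 1) := by
      rw [Subgroup.lowerCentralSeries_succ]
      exact Subgroup.commutator_mem_commutator ha' (Subgroup.mem_top b')
    rw [hlcs_bot, Subgroup.mem_bot, commutatorElement_eq_one_iff_mul_comm] at h1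
    have := congrArg (K.subtype) h1
    simpa using this
  -- A is normal in G
  have hAnorm : ∀ g : G, ∀ x ∈ A, g * x * g⁻¹ ∈ A := by
    intro g x hx
    obtain ⟨x', hx', rfl⟩ := hx
    have hconj : ∀ k : ↥K, g * (k : G) * g⁻¹ ∈ K := fun k => hKnorm.conj_mem k k.2 g
    let φ : ↥K →* ↥K :=
      { toFun := fun k => ⟨g * (k : G) * g⁻¹, hconj k⟩
        map_one' := by ext; simp
        map_mul' := by intro a b; ext; show g * ((a : G) * (b : G)) * g⁻¹ = g * (a : G) * g⁻¹ * (g * (b : G) * g⁻¹); group }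
    have hφ : φ x' ∈ Subgroup.lowerCentralSeries (⊤ : Subgroup ↥K) t :=
      Subgroup.lowerCentralSeries.map φ t ⟨x', hx', rfl⟩
    exact ⟨φ x', hφ, rfl⟩
  -- A is f-invariant
  have hfK : ∀ k : ↥K, f ⟨(k : G), hKH k.2⟩ ∈ K := fun k => hKf k k.2
  let e : ↥K →* ↥K :=
    { toFun := fun k => ⟨f ⟨(k : G), hKH k.2⟩, hfK k⟩
      map_one' := Subtype.ext (map_one f)
      map_mul' := fun a b =>
        Subtype.ext (map_mul f ⟨(a : G), hKH a.2⟩ ⟨(b : G), hKH b.2⟩) }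
  have hfA : ∀ (x : G) (hx : x ∈ A) (hxH : x ∈ H), f ⟨x, hxH⟩ ∈ A := by
    intro x hx hxH
    obtain ⟨x', hx', rfl⟩ := hx
    have he : e x' ∈ Subgroup.lowerCentralSeries (⊤ : Subgroup ↥K) t := Subgroup.lowerCentralSeries.map e t ⟨x', hx', rfl⟩
    exact ⟨e x', he, rfl⟩
  -- nilpotency of G and the finite index power property
  obtain ⟨n, hn⟩ := (inferInstance : Group.IsNilpotent G).nilpotent
  have hpow : ∀ g : G, ∃ m : ℕ, 0 < m ∧ g ^ m ∈ H := by
    intro g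
    obtain ⟨m, hm, _, hgm⟩ := Subgroup.exists_pow_mem_of_index_ne_zero hH.index_ne_zero g
    exact ⟨m, hm, hgm⟩
  -- apply the core construction
  obtain ⟨N, hNbot, hNA, hNcent, hNf⟩ :=
    stmt19_core htf n hn H hpow f A hAH hAnorm hab hfA hfA hAbot
  have hNH : N ≤ H := hNA.trans hAH
  refine hNbot (hcenter N hNH ?_ ?_ ?_)
  · -- N is contained in the image of the center of H
    intro x hx
    refine ⟨⟨x, hNH hx⟩, ?_, rfl⟩
    show (⟨x, hNH hx⟩ : ↥H) ∈ Subgroup.center ↥H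
    rw [Subgroup.mem_center_iff]
    intro b
    ext
    exact hNcent x hx (b : G)
  · -- N is normal (it is central in G)
    constructor
    intro x hx g
    have h1 : g * x * g⁻¹ = x := by
      rw [hNcent x hx g]
      group
    rw [h1]
    exact hx
  · -- N is f-invariant
    intro x hx
    exact hNf x hx (hNH hx)
end
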